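/- arXiv:2103.07375 — 14 statements merged into one kernel-verified Lean document; each statement's English description precedes it below -/
import Mathlib

section
/- If x and y are distinct twin vertices in a connected graph G of order at least 3, then every edge resolving function g of G satisfies g(x) + g(y) ≥ 1. -/
open Finset
open scoped Classical

variable {V : Type*}

/-- Distance from a vertex to an edge: minimum distance to an endpoint. -/
noncomputable def SimpleGraph.edgeDist (G : SimpleGraph V) (e : Sym2 V) (v : V) : ℕ :=
  Sym2.lift ⟨fun a b => min (G.dist a v) (G.dist b v), fun a b => min_comm _ _⟩ e

/-- A set of vertices is an edge resolving set if every pair of distinct edges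
is distinguished by some vertex of the set. -/
def SimpleGraph.IsEdgeResolvingSet (G : SimpleGraph V) (S : Set V) : Prop :=
  ∀ e₁ ∈ G.edgeSet, ∀ e₂ ∈ G.edgeSet, e₁ ≠ e₂ →
    ∃ s ∈ S, G.edgeDist e₁ s ≠ G.edgeDist e₂ s

/-- The edge dimension: minimum cardinality of an edge resolving set. -/
noncomputable def SimpleGraph.edim (G : SimpleGraph V) [Fintype V] : ℕ :=
  sInf {n | ∃ S : Finset V, G.IsEdgeResolvingSet ↑S ∧ S.card = n}

/-- An edge resolving function: a `[0,1]`-valued weighting of the vertices such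
that every pair of distinct edges is resolved by total weight at least 1. -/
def SimpleGraph.IsEdgeResolvingFunction (G : SimpleGraph V) [Fintype V] (g : V → ℝ) : Prop :=
  (∀ v, 0 ≤ g v ∧ g v ≤ 1) ∧
  ∀ e₁ ∈ G.edgeSet, ∀ e₂ ∈ G.edgeSet, e₁ ≠ e₂ →
    1 ≤ ∑ z ∈ Finset.univ.filter (fun z => G.edgeDist e₁ z ≠ G.edgeDist e₂ z), g z

/-- The fractional edge dimension. -/
noncomputable def SimpleGraph.edimf (G : SimpleGraph V) [Fintype V] : ℝ :=
  sInf {x | ∃ g : V → ℝ, G.IsEdgeResolvingFunction g ∧ ∑ v, g v = x}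

lemma twin_dist_le (G : SimpleGraph V) (hG : G.Connected) (x y z : V)
    (htwin : G.neighborSet x \ {y} = G.neighborSet y \ {x}) (hzx : z ≠ x) :
    G.dist y z ≤ G.dist x z := by
  obtain ⟨p, hp⟩ := hG.exists_walk_length_eq_dist x z
  cases p with
  | nil => exact absurd rfl hzx.symm
  | cons h q =>
    rename_i w
    simp only [SimpleGraph.Walk.length_cons] at hp
    by_cases hw : y = w
    · subst hw
      calc G.dist y z ≤ q.length := SimpleGraph.dist_le q
        _ ≤ q.length + 1 := Nat.le_succ _
        _ = G.dist x z := hp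
    · have hmem : w ∈ G.neighborSet x \ {y} := ⟨h, Ne.symm hw⟩
      rw [htwin] at hmem
      have hadj : G.Adj y w := hmem.1
      calc G.dist y z ≤ (SimpleGraph.Walk.cons hadj q).length := SimpleGraph.dist_le _
        _ = q.length + 1 := rfl
        _ = G.dist x z := hp

lemma twin_dist_eq (G : SimpleGraph V) (hG : G.Connected) (x y z : V)
    (htwin : G.neighborSet x \ {y} = G.neighborSet y \ {x}) (hzx : z ≠ x) (hzy : z ≠ y) :
    G.dist x z = G.dist y z :=
  le_antisymm (twin_dist_le G hG y x z htwin.symm hzy) (twin_dist_le G hG x y z htwin hzx)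

/-- For distinct twin vertices in a connected graph of order at least 3,
every edge resolving function `g` satisfies `g x + g y ≥ 1`. -/
theorem stmt_1 [Fintype V] (G : SimpleGraph V) (hG : G.Connected)
    (hn : 3 ≤ Fintype.card V) (x y : V) (hxy : x ≠ y)
    (htwin : G.neighborSet x \ {y} = G.neighborSet y \ {x})
    (g : V → ℝ) (hg : G.IsEdgeResolvingFunction g) :
    1 ≤ g x + g y := by
  -- find a common neighbor w of x and y with w ≠ y (and w ≠ x)
  have hw : ∃ w, G.Adj x w ∧ w ≠ y := by
    by_contra hc
    push_neg at hc
    have hNx : ∀ w, G.Adj x w → w = y := hc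
    have hNy : ∀ w, G.Adj y w → w = x := by
      intro w hadj
      by_contra hwx
      have : w ∈ G.neighborSet x \ {y} := htwin ▸ ⟨hadj, hwx⟩
      exact (hNx w this.1) |> fun h => this.2 h
    -- get a third vertex
    obtain ⟨z, hz⟩ : ∃ z : V, z ≠ x ∧ z ≠ y := by
      by_contra hz
      push_neg at hz
      have hsub : (Finset.univ : Finset V) ⊆ {x, y} := by
        intro v _
        rcases eq_or_ne v x with h | h
        · simp [h]
        · simp [hz v h]
      have := Finset.card_le_card hsub
      rw [Finset.card_univ] at this
      have h2 : ({x, y} : Finset V).card ≤ 2 := Finset.card_insert_le _ _ |>.trans (by simp)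
      omega
    have key : ∀ (u zz : V) (p : G.Walk u zz), u = x ∨ u = y → zz = x ∨ zz = y := by
      intro u zz p
      induction p with
      | nil => intro h; exact h
      | cons h q ih =>
        intro hu
        apply ih
        rcases hu with rfl | rfl
        · exact Or.inr (hNx _ h)
        · exact Or.inl (hNy _ h)
      done
    rcases key x z ((hG x z).some) (Or.inl rfl) with h | h
    · exact hz.1 h
    · exact hz.2 h
  obtain ⟨w, hadjx, hwy⟩ := hw
  have hadjy : G.Adj y w := by
    have : w ∈ G.neighborSet y \ {x} := htwin ▸ ⟨hadjx, hwy⟩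
    exact this.1
  have hwx : w ≠ x := hadjx.ne'
  -- the two edges
  have he1 : s(x, w) ∈ G.edgeSet := hadjx
  have he2 : s(y, w) ∈ G.edgeSet := hadjy
  have hne : s(x, w) ≠ s(y, w) := by
    intro h
    rw [Sym2.eq_iff] at h
    rcases h with ⟨h1, _⟩ | ⟨h1, _⟩
    · exact hxy h1
    · exact hwx h1.symm
  have hsum := hg.2 _ he1 _ he2 hne
  have hfilter : Finset.univ.filter
      (fun z => G.edgeDist s(x, w) z ≠ G.edgeDist s(y, w) z) ⊆ {x, y} := by
    intro z hz
    simp only [Finset.mem_filter, Finset.mem_univ, true_and] at hz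
    by_contra hmem
    simp only [Finset.mem_insert, Finset.mem_singleton] at hmem
    push_neg at hmem
    apply hz
    have hd : G.dist x z = G.dist y z := twin_dist_eq G hG x y z htwin hmem.1 hmem.2
    simp [SimpleGraph.edgeDist, hd]
  calc (1 : ℝ) ≤ ∑ z ∈ Finset.univ.filter
        (fun z => G.edgeDist s(x, w) z ≠ G.edgeDist s(y, w) z), g z := hsum
    _ ≤ ∑ z ∈ ({x, y} : Finset V), g z := by
        apply Finset.sum_le_sum_of_subset_of_nonneg hfilter
        intro i _ _
        exact (hg.1 i).1
    _ = g x + g y := Finset.sum_pair hxy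
end

section
/- If G is a connected graph with edge dimension edim(G) = 2, then G does not contain K_5 as a subgraph. -/
open Finset
open scoped Classical

variable {V : Type*}

/-- If `edim(G) = 2` then `G` contains no `K₅` subgraph. -/
theorem stmt_3 [Fintype V] (G : SimpleGraph V) (hG : G.Connected) (h : G.edim = 2) :
    ¬ ∃ f : Fin 5 ↪ V, ∀ i j : Fin 5, i ≠ j → G.Adj (f i) (f j) := by
  rintro ⟨f, hf⟩
  -- extract a resolving set of size 2
  have hne : {n | ∃ S : Finset V, G.IsEdgeResolvingSet ↑S ∧ S.card = n}.Nonempty := by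
    by_contra hc
    rw [Set.not_nonempty_iff_eq_empty] at hc
    rw [SimpleGraph.edim, hc, Nat.sInf_empty] at h
    omega
  have h2 : 2 ∈ {n | ∃ S : Finset V, G.IsEdgeResolvingSet ↑S ∧ S.card = n} := by
    rw [SimpleGraph.edim] at h
    exact h ▸ Nat.sInf_mem hne
  obtain ⟨S, hS, hcard⟩ := h2
  obtain ⟨s, t, hst, rfl⟩ := Finset.card_eq_two.mp hcard
  -- for each vertex u, the edge distances of K5-edges to u take at most 2 values
  have key : ∀ u : V, ∃ m : ℕ, ∀ i j : Fin 5, i ≠ j →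
      G.edgeDist s(f i, f j) u = m ∨ G.edgeDist s(f i, f j) u = m + 1 := by
    intro u
    obtain ⟨i0, -, hi0⟩ := Finset.exists_min_image Finset.univ (fun i => G.dist (f i) u)
      ⟨0, Finset.mem_univ 0⟩
    refine ⟨G.dist (f i0) u, fun i j hij => ?_⟩
    have hb : ∀ i : Fin 5, G.dist (f i) u ≤ G.dist (f i0) u + 1 := by
      intro i
      rcases eq_or_ne i i0 with rfl | hne'
      · omega
      · have htri := hG.dist_triangle (u := f i) (v := f i0) (w := u)
        have h1 : G.dist (f i) (f i0) = 1 :=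
          SimpleGraph.dist_eq_one_iff_adj.mpr (hf i i0 hne')
        omega
    have hlo := hi0 i (Finset.mem_univ i)
    have hlo' := hi0 j (Finset.mem_univ j)
    have hub := hb i
    have hub' := hb j
    have : G.edgeDist s(f i, f j) u = min (G.dist (f i) u) (G.dist (f j) u) := rfl
    omega
  obtain ⟨ms, hms⟩ := key s
  obtain ⟨mt, hmt⟩ := key t
  -- the five edges
  set edge : Fin 5 → Sym2 V :=
    ![s(f 0, f 1), s(f 0, f 2), s(f 0, f 3), s(f 1, f 2), s(f 1, f 3)] with hedge
  have hedgeSet : ∀ k, edge k ∈ G.edgeSet := by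
    intro k
    fin_cases k <;> exact (SimpleGraph.mem_edgeSet G).mpr (hf _ _ (by decide))
  have hne2 : ∀ (i j k l : Fin 5), (i, j) ≠ (k, l) → (j, i) ≠ (k, l) →
      (s(f i, f j) : Sym2 V) ≠ s(f k, f l) := by
    intro i j k l h1 h2 heq
    rw [Sym2.eq_iff] at heq
    rcases heq with ⟨ha, hb⟩ | ⟨ha, hb⟩ <;>
      rw [f.injective.eq_iff] at ha hb <;> subst ha <;> subst hb <;> simp_all
  have hedgeNe : ∀ a b : Fin 5, a ≠ b → edge a ≠ edge b := by
    intro a b hab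
    fin_cases a <;> fin_cases b <;>
      first
        | exact absurd rfl (by exact_mod_cast hab)
        | exact hne2 _ _ _ _ (by decide) (by decide)
  set A : Finset (ℕ × ℕ) := ({ms, ms + 1} : Finset ℕ) ×ˢ ({mt, mt + 1} : Finset ℕ) with hA
  have hmem : ∀ k : Fin 5, (G.edgeDist (edge k) s, G.edgeDist (edge k) t) ∈ A := by
    intro k
    rw [hA, Finset.mem_product]
    constructor
    · fin_cases k <;> simpa [hedge] using hms _ _ (by decide)
    · fin_cases k <;> simpa [hedge] using hmt _ _ (by decide)
  have hinj : ∀ a ∈ (Finset.univ : Finset (Fin 5)), ∀ b ∈ (Finset.univ : Finset (Fin 5)),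
      (G.edgeDist (edge a) s, G.edgeDist (edge a) t)
        = (G.edgeDist (edge b) s, G.edgeDist (edge b) t) → a = b := by
    intro a _ b _ hab
    by_contra hne'
    obtain ⟨u, hu, hdu⟩ := hS (edge a) (hedgeSet a) (edge b) (hedgeSet b) (hedgeNe a b hne')
    have : u = s ∨ u = t := by simpa using hu
    rcases this with rfl | rfl
    · exact hdu (congrArg Prod.fst hab)
    · exact hdu (congrArg Prod.snd hab)
  have hcardle : (Finset.univ : Finset (Fin 5)).card ≤ A.card :=
    Finset.card_le_card_of_injOn _ (fun k _ => hmem k) hinj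
  have hA4 : A.card ≤ 4 := by
    rw [hA, Finset.card_product]
    have h1 : ({ms, ms + 1} : Finset ℕ).card ≤ 2 := Finset.card_insert_le _ _
    have h2 : ({mt, mt + 1} : Finset ℕ).card ≤ 2 := Finset.card_insert_le _ _
    calc ({ms, ms + 1} : Finset ℕ).card * ({mt, mt + 1} : Finset ℕ).card
        ≤ 2 * 2 := Nat.mul_le_mul h1 h2
      _ = 4 := rfl
  simp [Finset.card_univ] at hcardle
  omega
end

section
/- If G is a connected graph with edge dimension edim(G) = 2, then G does not contain K_{3,3} as a subgraph. -/
open Finset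
open scoped Classical

variable {V : Type*}

lemma keylem (a b : Fin 3 → ℕ) (hab : ∀ i j : Fin 3, a i ≤ b j + 1 ∧ b j ≤ a i + 1) :
    ∃ m, ∀ i j : Fin 3, min (a i) (b j) = m ∨ min (a i) (b j) = m + 1 := by
  refine ⟨min (min (a 0) (min (a 1) (a 2))) (min (b 0) (min (b 1) (b 2))), ?_⟩
  have h00 := hab 0 0; have h01 := hab 0 1; have h02 := hab 0 2
  have h10 := hab 1 0; have h11 := hab 1 1; have h12 := hab 1 2
  have h20 := hab 2 0; have h21 := hab 2 1; have h22 := hab 2 2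
  intro i j
  have hi : a i = a 0 ∨ a i = a 1 ∨ a i = a 2 := by fin_cases i <;> simp
  have hj : b j = b 0 ∨ b j = b 1 ∨ b j = b 2 := by fin_cases j <;> simp
  omega

/-- If `edim(G) = 2` then `G` contains no `K_{3,3}` subgraph. -/
theorem stmt_4 [Fintype V] (G : SimpleGraph V) (hG : G.Connected) (h : G.edim = 2) :
    ¬ ∃ (u v : Fin 3 ↪ V), (∀ i j : Fin 3, u i ≠ v j) ∧
      (∀ i j : Fin 3, G.Adj (u i) (v j)) := by
  rintro ⟨u, v, hdisj, hadj⟩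
  -- get a resolving set of size 2
  have hne : {n | ∃ S : Finset V, G.IsEdgeResolvingSet ↑S ∧ S.card = n}.Nonempty := by
    by_contra hemp
    rw [Set.not_nonempty_iff_eq_empty] at hemp
    rw [SimpleGraph.edim, hemp, Nat.sInf_empty] at h
    omega
  have hmem := Nat.sInf_mem hne
  rw [show sInf {n | ∃ S : Finset V, G.IsEdgeResolvingSet ↑S ∧ S.card = n} = G.edim from rfl,
    h] at hmem
  obtain ⟨S, hres, hcard⟩ := hmem
  obtain ⟨s, t, hst, rfl⟩ := Finset.card_eq_two.mp hcard
  -- distances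
  have hdist1 : ∀ i j : Fin 3, G.dist (u i) (v j) = 1 := fun i j =>
    SimpleGraph.dist_eq_one_iff_adj.mpr (hadj i j)
  have hbound : ∀ (w : V) (i j : Fin 3),
      G.dist (u i) w ≤ G.dist (v j) w + 1 ∧ G.dist (v j) w ≤ G.dist (u i) w + 1 := by
    intro w i j
    constructor
    · have := hG.dist_triangle (u := u i) (v := v j) (w := w)
      rw [hdist1 i j] at this; omega
    · have := hG.dist_triangle (u := v j) (v := u i) (w := w)
      rw [SimpleGraph.dist_comm (u := v j) (v := u i), hdist1 i j] at this; omega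
  obtain ⟨ms, hms⟩ := keylem (fun i => G.dist (u i) s) (fun j => G.dist (v j) s)
    (fun i j => hbound s i j)
  obtain ⟨mt, hmt⟩ := keylem (fun i => G.dist (u i) t) (fun j => G.dist (v j) t)
    (fun i j => hbound t i j)
  set fs : Fin 3 × Fin 3 → ℕ := fun p => min (G.dist (u p.1) s) (G.dist (v p.2) s) with hfs
  set ft : Fin 3 × Fin 3 → ℕ := fun p => min (G.dist (u p.1) t) (G.dist (v p.2) t) with hft
  have hms' : ∀ p : Fin 3 × Fin 3, fs p = ms ∨ fs p = ms + 1 := fun p => hms p.1 p.2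
  have hmt' : ∀ p : Fin 3 × Fin 3, ft p = mt ∨ ft p = mt + 1 := fun p => hmt p.1 p.2
  -- pigeonhole
  have hcardlt : Fintype.card (Bool × Bool) < Fintype.card (Fin 3 × Fin 3) := by simp
  obtain ⟨p, q, hpne, hpeq⟩ := Fintype.exists_ne_map_eq_of_card_lt
    (fun p : Fin 3 × Fin 3 => ((fs p = ms : Bool), (ft p = mt : Bool))) hcardlt
  have hp1 : fs p = ms ↔ fs q = ms := by
    have := congrArg Prod.fst hpeq
    simpa using this
  have hp2 : ft p = mt ↔ ft q = mt := by
    have := congrArg Prod.snd hpeq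
    simpa using this
  have heqs : fs p = fs q := by have := hms' p; have := hms' q; omega
  have heqt : ft p = ft q := by have := hmt' p; have := hmt' q; omega
  -- the two edges
  obtain ⟨i, j⟩ := p
  obtain ⟨i', j'⟩ := q
  have he1 : s(u i, v j) ∈ G.edgeSet := (hadj i j)
  have he2 : s(u i', v j') ∈ G.edgeSet := (hadj i' j')
  have hedne : s(u i, v j) ≠ s(u i', v j') := by
    intro hcontra
    rw [Sym2.eq_iff] at hcontra
    rcases hcontra with ⟨h1, h2⟩ | ⟨h1, h2⟩
    · exact hpne (Prod.ext (u.injective h1) (v.injective h2))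
    · exact hdisj i j' h1
  obtain ⟨z, hz, hzne⟩ := hres _ he1 _ he2 hedne
  have hed : ∀ (w : V) (i j : Fin 3),
      G.edgeDist s(u i, v j) w = min (G.dist (u i) w) (G.dist (v j) w) := fun _ _ _ => rfl
  rw [hed, hed] at hzne
  simp only [Finset.coe_insert, Finset.coe_singleton, Set.mem_insert_iff,
    Set.mem_singleton_iff] at hz
  rcases hz with rfl | rfl
  · exact hzne heqs
  · exact hzne heqt
end

section
/- There exists a non-planar connected graph G with edge dimension edim(G) = 2. -/
open Finset
open scoped Classical

variable {V : Type*}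

/-- `H` is a minor of `G`: there are disjoint connected branch sets in `G`,
one for each vertex of `H`, with edges of `H` witnessed by edges of `G`. -/
def SimpleGraph.IsMinorOf {W : Type*} (H : SimpleGraph W) (G : SimpleGraph V) : Prop :=
  ∃ B : W → Set V, (∀ w, (G.induce (B w)).Connected) ∧
    (Pairwise fun w w' => Disjoint (B w) (B w')) ∧
    ∀ ⦃w w'⦄, H.Adj w w' → ∃ a ∈ B w, ∃ b ∈ B w', G.Adj a b


-- Auxiliary construction

def adjL : List (List Bool) := [[false, false, false, true, true, true, false, false, false, false, false, false, false, false, false], [false, false, false, true, false, false, true, false, true, false, false, false, false, false, false], [false, false, false, false, true, false, false, false, false, false, true, false, false, true, false], [true, true, false, false, false, false, false, false, false, false, false, false, true, false, false], [true, false, true, false, false, false, false, true, false, false, false, false, false, false, false], [true, false, false, false, false, false, false, false, false, true, false, false, false, false, true], [false, true, false, false, false, false, false, true, false, false, false, false, false, false, false], [false, false, false, false, true, false, true, false, false, false, false, false, false, false, false], [false, true, false, false, false, false, false, false, false, true, false, false, false, false, false], [false, false, false, false, false, true, false, false, true, false, false, false, false, false, false], [false, false, true, false, false, false, false, false, false,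 false, false, true, false, false, false], [false, false, false, false, false, false, false, false, false, false, true, false, true, false, false], [false, false, false, true, false, false, false, false, false, false, false, true, false, false, false], [false, false, true, false, false, false, false, false, false, false, false, false, false, false, true], [false, false, false, false, false, true, false, false, false, false, false, false, false, true, false]]

def dL : List (List Nat) := [[0, 2, 2, 1, 1, 1, 3, 2, 3, 2, 3, 3, 2, 3, 2], [2, 0, 4, 1, 3, 3, 1, 2, 1, 2, 4, 3, 2, 5, 4], [2, 4, 0, 3, 1, 3, 3, 2, 5, 4, 1, 2, 3, 1, 2], [1, 1, 3, 0, 2, 2, 2, 3, 2, 3, 3, 2, 1, 4, 3], [1, 3, 1, 2, 0, 2, 2, 1, 4, 3, 2, 3, 3, 2, 3], [1, 3, 3, 2, 2, 0, 4, 3, 2, 1, 4, 4, 3, 2, 1], [3, 1, 3, 2, 2, 4, 0, 1, 2, 3, 4, 4, 3, 4, 5], [2, 2, 2, 3, 1, 3, 1, 0, 3, 4, 3, 4, 4, 3, 4], [3, 1, 5, 2, 4, 2, 2, 3, 0, 1, 5, 4, 3, 4, 3], [2, 2, 4, 3, 3, 1, 3, 4, 1, 0, 5, 5, 4, 3, 2],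 [3, 4, 1, 3, 2, 4, 4, 3, 5, 5, 0, 1, 2, 2, 3], [3, 3, 2, 2, 3, 4, 4, 4, 4, 5, 1, 0, 1, 3, 4], [2, 2, 3, 1, 3, 3, 3, 4, 3, 4, 2, 1, 0, 4, 4], [3, 5, 1, 4, 2, 2, 4, 3, 4, 3, 2, 3, 4, 0, 1], [2, 4, 2, 3, 3, 1, 5, 4, 3, 2, 3, 4, 4, 1, 0]]

def myAdj (a b : Fin 15) : Bool := (adjL.getD a.val []).getD b.val false
def dT (a b : Fin 15) : ℕ := (dL.getD a.val []).getD b.val 0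

def G15 : SimpleGraph (Fin 15) where
  Adj a b := myAdj a b = true
  symm := ⟨fun a b h => (by decide : ∀ a b : Fin 15, myAdj a b = true → myAdj b a = true) a b h⟩
  loopless := ⟨fun a h => absurd h ((by decide : ∀ a : Fin 15, ¬ myAdj a a = true) a)⟩

instance : DecidableRel G15.Adj := fun a b => inferInstanceAs (Decidable (_ = true))

theorem H0 : ∀ a b : Fin 15, dT a b = 0 ↔ a = b := by decide
theorem H1 : ∀ a b : Fin 15, a ≠ b → ∃ c, G15.Adj a c ∧ dT c b + 1 = dT a b := by decide
theorem H2 : ∀ a b c : Fin 15, G15.Adj a c → dT a b ≤ dT c b + 1 := by decide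

theorem exists_walk_dT : ∀ (k : ℕ) (a b : Fin 15), dT a b = k → ∃ w : G15.Walk a b, w.length = k := by
  intro k
  induction k with
  | zero => intro a b h; obtain rfl := (H0 a b).1 h; exact ⟨SimpleGraph.Walk.nil, rfl⟩
  | succ k ih =>
    intro a b h
    have hab : a ≠ b := by
      rintro rfl; rw [(H0 a a).2 rfl] at h; exact Nat.noConfusion h
    obtain ⟨c, hadj, hc⟩ := H1 a b hab
    have : dT c b = k := by omega
    obtain ⟨w, hw⟩ := ih c b this
    exact ⟨SimpleGraph.Walk.cons hadj w, by simp [hw]⟩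

theorem walk_lb : ∀ {a b : Fin 15} (w : G15.Walk a b), dT a b ≤ w.length := by
  intro a b w
  induction w with
  | nil => rw [(H0 _ _).2 rfl]; exact Nat.zero_le _
  | cons h w ih => exact le_trans (H2 _ _ _ h) (by simpa using Nat.add_le_add_right ih 1)

theorem reach15 (a b : Fin 15) : G15.Reachable a b :=
  ⟨(exists_walk_dT (dT a b) a b rfl).choose⟩

theorem G15_conn : G15.Connected := by
  rw [SimpleGraph.connected_iff]
  exact ⟨fun a b => reach15 a b, ⟨0⟩⟩

theorem dist_eq_dT (a b : Fin 15) : G15.dist a b = dT a b := by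
  apply le_antisymm
  · obtain ⟨w, hw⟩ := exists_walk_dT (dT a b) a b rfl
    exact hw ▸ SimpleGraph.dist_le w
  · obtain ⟨w, hw⟩ := (reach15 a b).exists_walk_length_eq_dist
    exact hw ▸ walk_lb w

theorem edgeDist_eq (a b : Fin 15) (s : Fin 15) :
    G15.edgeDist s(a, b) s = min (dT a s) (dT b s) := by
  simp [SimpleGraph.edgeDist, dist_eq_dT]

theorem key_resolve : ∀ a b c d : Fin 15, G15.Adj a b → G15.Adj c d →
    ¬((a = c ∧ b = d) ∨ (a = d ∧ b = c)) →
    min (dT a 8) (dT b 8) ≠ min (dT c 8) (dT d 8) ∨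
    min (dT a 14) (dT b 14) ≠ min (dT c 14) (dT d 14) := by decide

set_option maxRecDepth 100000 in
theorem key_low : ∀ s : Fin 15, ∃ a b c d : Fin 15, G15.Adj a b ∧ G15.Adj c d ∧
    ¬((a = c ∧ b = d) ∨ (a = d ∧ b = c)) ∧
    min (dT a s) (dT b s) = min (dT c s) (dT d s) := by decide

theorem sym2_ne {a b c d : Fin 15} (h : ¬((a = c ∧ b = d) ∨ (a = d ∧ b = c))) :
    s(a, b) ≠ s(c, d) := by
  rw [Ne, Sym2.eq_iff]; exact h

theorem G15_edim : G15.edim = 2 := by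
  have mem2 : 2 ∈ {n | ∃ S : Finset (Fin 15), G15.IsEdgeResolvingSet ↑S ∧ S.card = n} := by
    refine ⟨{8, 14}, ?_, by decide⟩
    intro e₁ he₁ e₂ he₂ hne
    induction e₁ using Sym2.ind with | _ a b =>
    induction e₂ using Sym2.ind with | _ c d =>
    rw [SimpleGraph.mem_edgeSet] at he₁ he₂
    have hne' : ¬((a = c ∧ b = d) ∨ (a = d ∧ b = c)) := by
      rw [← Sym2.eq_iff]; exact hne
    rcases key_resolve a b c d he₁ he₂ hne' with h | h
    · exact ⟨8, by simp, by rw [edgeDist_eq, edgeDist_eq]; exact h⟩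
    · exact ⟨14, by simp, by rw [edgeDist_eq, edgeDist_eq]; exact h⟩
  have lb : ∀ m ∈ {n | ∃ S : Finset (Fin 15), G15.IsEdgeResolvingSet ↑S ∧ S.card = n}, 2 ≤ m := by
    rintro m ⟨S, hres, rfl⟩
    by_contra hlt
    push_neg at hlt
    interval_cases h : S.card
    · rw [Finset.card_eq_zero] at h; subst h
      have h1 : s((0 : Fin 15), 3) ∈ G15.edgeSet := by rw [SimpleGraph.mem_edgeSet]; decide
      have h2 : s((0 : Fin 15), 4) ∈ G15.edgeSet := by rw [SimpleGraph.mem_edgeSet]; decide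
      obtain ⟨t, ht, -⟩ := hres _ h1 _ h2 (sym2_ne (by decide))
      simp at ht
    · rw [Finset.card_eq_one] at h
      obtain ⟨s, rfl⟩ := h
      obtain ⟨a, b, c, d, hab, hcd, hne, heq⟩ := key_low s
      obtain ⟨t, ht, hd⟩ := hres s(a, b) (G15.mem_edgeSet.mpr hab)
        s(c, d) (G15.mem_edgeSet.mpr hcd) (sym2_ne hne)
      simp at ht
      subst ht
      rw [edgeDist_eq, edgeDist_eq] at hd
      exact hd heq
  exact le_antisymm (Nat.sInf_le mem2) (le_csInf ⟨2, mem2⟩ lb)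

def Bf (w : Fin 3 ⊕ Fin 3) : Finset (Fin 15) :=
  match w with
  | .inl i => ([{0}, {1, 6, 7, 8, 9}, {2, 10, 11, 12, 13, 14}] : List (Finset (Fin 15))).getD i.val ∅
  | .inr i => ([{3}, {4}, {5}] : List (Finset (Fin 15))).getD i.val ∅

theorem Bf_disj : ∀ w w' : Fin 3 ⊕ Fin 3, w ≠ w' → ∀ x : Fin 15, x ∈ Bf w → x ∉ Bf w' := by
  decide

theorem Bf_witness_lr : ∀ i j : Fin 3,
    (∃ a, a ∈ Bf (.inl i) ∧ ∃ b, b ∈ Bf (.inr j) ∧ G15.Adj a b) ∧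
    (∃ a, a ∈ Bf (.inr j) ∧ ∃ b, b ∈ Bf (.inl i) ∧ G15.Adj a b) := by decide

theorem Bf_witness : ∀ w w' : Fin 3 ⊕ Fin 3, (completeBipartiteGraph (Fin 3) (Fin 3)).Adj w w' →
    ∃ a, a ∈ Bf w ∧ ∃ b, b ∈ Bf w' ∧ G15.Adj a b := by
  rintro (i | i) (j | j) h
  · exact absurd h (by simp [completeBipartiteGraph])
  · exact (Bf_witness_lr i j).1
  · exact (Bf_witness_lr j i).2
  · exact absurd h (by simp [completeBipartiteGraph])

theorem Bf_pre : ∀ w : Fin 3 ⊕ Fin 3, (G15.induce ↑(Bf w)).Preconnected := by decide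

theorem Bf_nonempty : ∀ w : Fin 3 ⊕ Fin 3, ∃ x, x ∈ Bf w := by decide

theorem Bf_conn (w : Fin 3 ⊕ Fin 3) : (G15.induce ↑(Bf w)).Connected := by
  rw [SimpleGraph.connected_iff]
  obtain ⟨x, hx⟩ := Bf_nonempty w
  exact ⟨Bf_pre w, ⟨⟨x, by simpa using hx⟩⟩⟩


/-- There exists a non-planar (by Wagner's theorem: containing a `K₅` or `K_{3,3}` minor)
connected graph with edge dimension 2. -/
theorem stmt_5 :
    ∃ (n : ℕ) (G : SimpleGraph (Fin n)), G.Connected ∧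
      ((⊤ : SimpleGraph (Fin 5)).IsMinorOf G ∨
        (completeBipartiteGraph (Fin 3) (Fin 3)).IsMinorOf G) ∧
      G.edim = 2 := by
  refine ⟨15, G15, G15_conn, Or.inr ⟨fun w => ↑(Bf w), Bf_conn, ?_, ?_⟩, G15_edim⟩
  · intro w w' h
    rw [Set.disjoint_left]
    intro x hx hx'
    exact Bf_disj w w' h x (by simpa using hx) (by simpa using hx')
  · intro w w' h
    obtain ⟨a, ha, b, hb, hab⟩ := Bf_witness w w' h
    exact ⟨a, by simpa using ha, b, by simpa using hb, hab⟩
end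

section
/- For any two distinct edges e1, e2 of a connected graph G, the set R_e{e1,e2} = {z ∈ V(G) : d(z,e1) ≠ d(z,e2)} has cardinality at least 2. -/
open Finset
open scoped Classical

variable {V : Type*}

lemma edgeDist_eq_zero_of_mem (G : SimpleGraph V) {e : Sym2 V} {v : V} (h : v ∈ e) :
    G.edgeDist e v = 0 := by
  induction e using Sym2.inductionOn with
  | hf x y =>
    simp only [SimpleGraph.edgeDist, Sym2.lift_mk]
    rcases Sym2.mem_iff.mp h with rfl | rfl
    · simp [SimpleGraph.dist_self]
    · simp [SimpleGraph.dist_self]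

lemma edgeDist_pos_of_not_mem (G : SimpleGraph V) (hG : G.Connected) {e : Sym2 V} {v : V}
    (h : v ∉ e) : 0 < G.edgeDist e v := by
  induction e using Sym2.inductionOn with
  | hf x y =>
    simp only [SimpleGraph.edgeDist, Sym2.lift_mk, lt_min_iff]
    constructor
    · exact hG.pos_dist_of_ne (fun hxv => h (hxv ▸ Sym2.mem_mk_left x y))
    · exact hG.pos_dist_of_ne (fun hyv => h (hyv ▸ Sym2.mem_mk_right x y))

lemma exists_mem_not_mem {e₁ e₂ : Sym2 V} (hd : ¬ e₁.IsDiag) (hne : e₁ ≠ e₂) :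
    ∃ b, b ∈ e₁ ∧ b ∉ e₂ := by
  induction e₁ using Sym2.inductionOn with
  | hf a b =>
    by_contra hc
    push_neg at hc
    have ha : a ∈ e₂ := hc a (Sym2.mem_mk_left a b)
    have hb : b ∈ e₂ := hc b (Sym2.mem_mk_right a b)
    have hab : a ≠ b := fun h => hd (by simp [h])
    exact hne ((Sym2.mem_and_mem_iff hab).mp ⟨ha, hb⟩).symm

/-- For any two distinct edges of a connected graph, the resolving set
`R_e{e₁,e₂}` has cardinality at least 2. -/
theorem stmt_7 [Fintype V] (G : SimpleGraph V) (hG : G.Connected)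
    (e₁ e₂ : Sym2 V) (h₁ : e₁ ∈ G.edgeSet) (h₂ : e₂ ∈ G.edgeSet) (hne : e₁ ≠ e₂) :
    2 ≤ (Finset.univ.filter (fun z => G.edgeDist e₁ z ≠ G.edgeDist e₂ z)).card := by
  obtain ⟨b, hb1, hb2⟩ := exists_mem_not_mem (G.not_isDiag_of_mem_edgeSet h₁) hne
  obtain ⟨d, hd2, hd1⟩ := exists_mem_not_mem (G.not_isDiag_of_mem_edgeSet h₂) hne.symm
  have hbd : b ≠ d := fun h => hb2 (h ▸ hd2)
  have hbmem : b ∈ Finset.univ.filter (fun z => G.edgeDist e₁ z ≠ G.edgeDist e₂ z) := by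
    simp only [Finset.mem_filter, Finset.mem_univ, true_and]
    rw [edgeDist_eq_zero_of_mem G hb1]
    exact fun h => (edgeDist_pos_of_not_mem G hG hb2).ne' h.symm
  have hdmem : d ∈ Finset.univ.filter (fun z => G.edgeDist e₁ z ≠ G.edgeDist e₂ z) := by
    simp only [Finset.mem_filter, Finset.mem_univ, true_and]
    rw [edgeDist_eq_zero_of_mem G hd2]
    exact fun h => (edgeDist_pos_of_not_mem G hG hd1).ne' h
  exact Finset.one_lt_card.mpr ⟨b, hbmem, d, hdmem, hbd⟩
end

section
/- For the path P_n on n ≥ 3 vertices, edim_f(P_n) = 1. -/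
open Finset
open scoped Classical

variable {V : Type*}

lemma walk_len_ge {n : ℕ} {u v : Fin n} (w : (SimpleGraph.pathGraph n).Walk u v) :
    Nat.dist u.val v.val ≤ w.length := by
  induction w with
  | nil => simp [Nat.dist_self]
  | cons h p ih =>
    rename_i a b c
    rw [SimpleGraph.pathGraph_adj] at h
    calc Nat.dist a.val c.val ≤ Nat.dist a.val b.val + Nat.dist b.val c.val :=
          Nat.dist.triangle_inequality _ _ _
      _ ≤ 1 + p.length := by
          have : Nat.dist a.val b.val = 1 := by
            rcases h with h | h <;> simp [Nat.dist, ← h] <;> omega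
          omega
      _ = (SimpleGraph.Walk.cons (by rw [SimpleGraph.pathGraph_adj]; exact h) p).length := by
          simp [SimpleGraph.Walk.length_cons, Nat.add_comm]

lemma pathGraph_dist_zero {n : ℕ} (hn : 1 ≤ n) (u : Fin n) :
    (SimpleGraph.pathGraph n).dist u ⟨0, hn⟩ = u.val := by
  obtain ⟨k, hk⟩ := u
  induction k with
  | zero => simp [SimpleGraph.dist_self]
  | succ k ih =>
    have hk' : k < n := by omega
    have adj : (SimpleGraph.pathGraph n).Adj ⟨k+1, hk⟩ ⟨k, hk'⟩ := by
      rw [SimpleGraph.pathGraph_adj]; right; rfl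
    have hle : (SimpleGraph.pathGraph n).dist ⟨k+1, hk⟩ ⟨0, hn⟩ ≤ k + 1 := by
      have htri := SimpleGraph.Connected.dist_triangle
        (G := SimpleGraph.pathGraph n) (by
          rcases n with _ | m
          · omega
          · exact SimpleGraph.pathGraph_connected m)
        (u := ⟨k+1, hk⟩) (v := ⟨k, hk'⟩) (w := ⟨0, hn⟩)
      have h1 : (SimpleGraph.pathGraph n).dist ⟨k+1, hk⟩ ⟨k, hk'⟩ = 1 :=
        (SimpleGraph.dist_eq_one_iff_adj).2 adj
      rw [h1, ih hk'] at htri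
      simp only [Fin.val_mk] at htri ⊢
      omega
    have hge : k + 1 ≤ (SimpleGraph.pathGraph n).dist ⟨k+1, hk⟩ ⟨0, hn⟩ := by
      have hreach : (SimpleGraph.pathGraph n).Reachable ⟨k+1, hk⟩ ⟨0, hn⟩ := by
        apply SimpleGraph.pathGraph_preconnected
      obtain ⟨w, hw⟩ := hreach.exists_walk_length_eq_dist
      have := walk_len_ge w
      rw [hw] at this
      simp only [Fin.val_mk, Nat.dist_zero_right] at this ⊢
      exact this
    simp only [Fin.val_mk]
    omega

lemma edgeDist_zero {n : ℕ} (hn : 1 ≤ n) (a b : Fin n) :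
    (SimpleGraph.pathGraph n).edgeDist s(a, b) ⟨0, hn⟩ = min a.val b.val := by
  simp [SimpleGraph.edgeDist, pathGraph_dist_zero hn]

lemma edgeDist_zero_inj {n : ℕ} (hn : 1 ≤ n) :
    ∀ e₁ ∈ (SimpleGraph.pathGraph n).edgeSet, ∀ e₂ ∈ (SimpleGraph.pathGraph n).edgeSet,
      (SimpleGraph.pathGraph n).edgeDist e₁ ⟨0, hn⟩ =
        (SimpleGraph.pathGraph n).edgeDist e₂ ⟨0, hn⟩ → e₁ = e₂ := by
  intro e₁ he₁ e₂ he₂ h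
  induction e₁ using Sym2.ind with
  | _ a b =>
    induction e₂ using Sym2.ind with
    | _ c d =>
      rw [SimpleGraph.mem_edgeSet, SimpleGraph.pathGraph_adj] at he₁ he₂
      rw [edgeDist_zero hn, edgeDist_zero hn] at h
      have : (a.val = c.val ∧ b.val = d.val) ∨ (a.val = d.val ∧ b.val = c.val) := by omega
      rcases this with ⟨h1, h2⟩ | ⟨h1, h2⟩
      · rw [Fin.ext h1, Fin.ext h2]
      · rw [Fin.ext h1, Fin.ext h2, Sym2.eq_swap]

/-- For the path `P_n` with `n ≥ 3`, `edim_f(P_n) = 1`. -/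
theorem stmt_8 (n : ℕ) (hn : 3 ≤ n) :
    (SimpleGraph.pathGraph n).edimf = 1 := by
  have hn1 : 1 ≤ n := by omega
  set z0 : Fin n := ⟨0, hn1⟩ with hz0
  -- the witness function: indicator of z0
  set g : Fin n → ℝ := fun v => if v = z0 then 1 else 0 with hg
  have hgres : (SimpleGraph.pathGraph n).IsEdgeResolvingFunction g := by
    constructor
    · intro v; by_cases h : v = z0 <;> simp [hg, h]
    · intro e₁ he₁ e₂ he₂ hne
      have hz0mem : z0 ∈ Finset.univ.filter
          (fun z => (SimpleGraph.pathGraph n).edgeDist e₁ z ≠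
            (SimpleGraph.pathGraph n).edgeDist e₂ z) := by
        simp only [Finset.mem_filter, Finset.mem_univ, true_and]
        intro h
        exact hne (edgeDist_zero_inj hn1 e₁ he₁ e₂ he₂ h)
      calc (1:ℝ) = g z0 := by simp [hg]
        _ ≤ _ := Finset.single_le_sum (f := g)
              (fun i _ => by by_cases h : i = z0 <;> simp [hg, h]) hz0mem
  have hsum : ∑ v, g v = 1 := by
    rw [hg]
    simp [Finset.sum_ite_eq']
  have hmem : (1:ℝ) ∈ {x | ∃ g : Fin n → ℝ,
      (SimpleGraph.pathGraph n).IsEdgeResolvingFunction g ∧ ∑ v, g v = x} :=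
    ⟨g, hgres, hsum⟩
  have hlb : ∀ x ∈ {x | ∃ g : Fin n → ℝ,
      (SimpleGraph.pathGraph n).IsEdgeResolvingFunction g ∧ ∑ v, g v = x}, (1:ℝ) ≤ x := by
    rintro x ⟨f, ⟨hf01, hfres⟩, rfl⟩
    have h1 : (1:ℕ) < n := by omega
    have h2 : (2:ℕ) < n := by omega
    have e1 : Sym2 (Fin n) := s(⟨0, hn1⟩, ⟨1, h1⟩)
    have he1 : s(⟨0, hn1⟩, ⟨1, h1⟩) ∈ (SimpleGraph.pathGraph n).edgeSet := by
      rw [SimpleGraph.mem_edgeSet, SimpleGraph.pathGraph_adj]; left; rfl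
    have he2 : s(⟨1, h1⟩, ⟨2, h2⟩) ∈ (SimpleGraph.pathGraph n).edgeSet := by
      rw [SimpleGraph.mem_edgeSet, SimpleGraph.pathGraph_adj]; left; rfl
    have hne : s((⟨0, hn1⟩ : Fin n), ⟨1, h1⟩) ≠ s(⟨1, h1⟩, ⟨2, h2⟩) := by
      intro H
      rw [Sym2.eq_iff] at H
      rcases H with ⟨h, -⟩ | ⟨h, -⟩ <;> exact absurd (congrArg Fin.val h) (by simp)
    calc (1:ℝ) ≤ ∑ z ∈ Finset.univ.filter
          (fun z => (SimpleGraph.pathGraph n).edgeDist s(⟨0, hn1⟩, ⟨1, h1⟩) z ≠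
            (SimpleGraph.pathGraph n).edgeDist s(⟨1, h1⟩, ⟨2, h2⟩) z), f z :=
          hfres _ he1 _ he2 hne
      _ ≤ ∑ v, f v := Finset.sum_le_sum_of_subset_of_nonneg
          (Finset.filter_subset _ _) (fun i _ _ => (hf01 i).1)
  apply le_antisymm
  · exact csInf_le ⟨1, fun x hx => hlb x hx⟩ hmem
  · exact le_csInf ⟨1, hmem⟩ hlb
end

section
/- For any connected graph G of order n ≥ 3, edim_f(G) = 1 if and only if G is a path. -/
open Finset
open scoped Classical

variable {V : Type*}

namespace SimpleGraph

lemma edgeDist_mk (G : SimpleGraph V) (a b v : V) :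
    G.edgeDist s(a, b) v = min (G.dist a v) (G.dist b v) := rfl

lemma iso_dist_le {W : Type*} {G : SimpleGraph V} {G' : SimpleGraph W} (ψ : G ≃g G')
    (u v : V) : G'.dist (ψ u) (ψ v) ≤ G.dist u v := by
  by_cases hr : G.Reachable u v
  · obtain ⟨p, hp⟩ := hr.exists_walk_length_eq_dist
    calc G'.dist (ψ u) (ψ v) ≤ (p.map ψ.toHom).length := dist_le _
      _ = G.dist u v := by rw [Walk.length_map, hp]
  · rw [dist_eq_zero_of_not_reachable hr]
    rw [dist_eq_zero_of_not_reachable]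
    intro ⟨q⟩
    exact hr ⟨(q.map ψ.symm.toHom).copy (ψ.symm_apply_apply u) (ψ.symm_apply_apply v)⟩

/-- distance is preserved under isomorphism -/
lemma iso_dist {W : Type*} {G : SimpleGraph V} {G' : SimpleGraph W} (φ : G ≃g G')
    (u v : V) : G'.dist (φ u) (φ v) = G.dist u v := by
  refine le_antisymm (iso_dist_le φ u v) ?_
  have := iso_dist_le φ.symm (φ u) (φ v)
  simpa using this

end SimpleGraph

namespace SimpleGraph

lemma pathGraph_walk_le {n : ℕ} {u v : Fin n} (p : (pathGraph n).Walk u v) :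
    u.val ≤ v.val + p.length ∧ v.val ≤ u.val + p.length := by
  induction p with
  | nil => simp
  | cons h q ih =>
    rw [pathGraph_adj] at h
    simp only [Walk.length_cons]
    omega

lemma pathGraph_dist {n : ℕ} (i : Fin (n + 1)) : (pathGraph (n + 1)).dist i 0 = i.val := by
  refine le_antisymm ?_ ?_
  · induction i using Fin.induction with
    | zero => simp
    | succ i ih =>
      have hadj : (pathGraph (n + 1)).Adj i.succ i.castSucc := by
        rw [pathGraph_adj]; right
        simp [Fin.val_succ]
      calc (pathGraph (n + 1)).dist i.succ 0
          ≤ (pathGraph (n + 1)).dist i.succ i.castSucc + (pathGraph (n + 1)).dist i.castSucc 0 :=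
            (pathGraph_connected n).dist_triangle
        _ ≤ 1 + i.val := by
            rw [dist_eq_one_iff_adj.mpr hadj]
            exact Nat.add_le_add_left (by simpa using ih) 1
        _ = i.succ.val := by simp [Fin.val_succ]; omega
  · obtain ⟨p, hp⟩ := ((pathGraph_connected n) i 0).exists_walk_length_eq_dist
    have := (pathGraph_walk_le p).1
    simp only [Fin.val_zero] at this
    omega

lemma pathGraph_edgeDist_inj {n : ℕ} :
    ∀ e₁ ∈ (pathGraph (n + 1)).edgeSet, ∀ e₂ ∈ (pathGraph (n + 1)).edgeSet,
    (pathGraph (n + 1)).edgeDist e₁ 0 = (pathGraph (n + 1)).edgeDist e₂ 0 → e₁ = e₂ := by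
  intro e₁ he₁ e₂ he₂ h
  induction e₁ using Sym2.ind with
  | _ a b =>
  induction e₂ using Sym2.ind with
  | _ c d =>
  rw [mem_edgeSet, pathGraph_adj] at he₁ he₂
  rw [edgeDist_mk, edgeDist_mk, pathGraph_dist, pathGraph_dist, pathGraph_dist,
    pathGraph_dist] at h
  rw [Sym2.eq_iff]
  have hext : (a.val = c.val ∧ b.val = d.val) ∨ (a.val = d.val ∧ b.val = c.val) := by omega
  rcases hext with ⟨h1, h2⟩ | ⟨h1, h2⟩
  · exact Or.inl ⟨Fin.ext h1, Fin.ext h2⟩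
  · exact Or.inr ⟨Fin.ext h1, Fin.ext h2⟩

end SimpleGraph

namespace SimpleGraph

variable {G : SimpleGraph V}

lemma iso_edgeDist {W : Type*} {G' : SimpleGraph W} (φ : G ≃g G') (e : Sym2 V) (z : V) :
    G'.edgeDist (e.map φ) (φ z) = G.edgeDist e z := by
  induction e using Sym2.ind with
  | _ a b =>
    rw [Sym2.map_pair_eq, edgeDist_mk, edgeDist_mk, iso_dist φ, iso_dist φ]

lemma iso_mem_edgeSet {W : Type*} {G' : SimpleGraph W} (φ : G ≃g G') {e : Sym2 V}
    (he : e ∈ G.edgeSet) : e.map φ ∈ G'.edgeSet := by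
  induction e using Sym2.ind with
  | _ a b =>
    rw [Sym2.map_pair_eq, mem_edgeSet]
    rw [mem_edgeSet] at he
    exact φ.map_rel_iff.mpr he

/-- every vertex of a connected graph with at least two vertices has a neighbor -/
lemma exists_neighbor (hG : G.Connected) (v : V) (h2 : ∃ u : V, u ≠ v) :
    ∃ w, G.Adj v w := by
  obtain ⟨u, hu⟩ := h2
  have hd : G.dist v u ≠ 0 := by
    rw [dist_ne_zero_iff_ne_and_reachable]
    exact ⟨fun h => hu h.symm, hG v u⟩
  obtain ⟨p, hp⟩ := exists_walk_of_dist_ne_zero hd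
  obtain ⟨w, hadj, q, rfl⟩ := Walk.exists_eq_cons_of_ne (fun h => hu h.symm) p
  exact ⟨w, hadj⟩

/-- a connected graph on at least 3 vertices has two distinct edges -/
lemma exists_two_edges [Fintype V] (hG : G.Connected) (hn : 3 ≤ Fintype.card V) :
    ∃ e₁ ∈ G.edgeSet, ∃ e₂ ∈ G.edgeSet, e₁ ≠ e₂ := by
  have h1 : 1 ≤ Fintype.card V := by omega
  obtain ⟨a⟩ := Fintype.card_pos_iff.mp h1
  have : Nontrivial V := Fintype.one_lt_card_iff_nontrivial.mp (by omega)
  obtain ⟨b, hb⟩ := exists_ne a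
  obtain ⟨x, hax⟩ := exists_neighbor hG a ⟨b, hb⟩
  obtain ⟨c, hc⟩ : ∃ c : V, c ≠ a ∧ c ≠ x := by
    by_contra h
    push_neg at h
    have : (Finset.univ : Finset V) ⊆ {a, x} := by
      intro z _
      simp only [Finset.mem_insert, Finset.mem_singleton]
      by_cases hza : z = a
      · exact Or.inl hza
      · exact Or.inr ((h z hza))
    have := Finset.card_le_card this
    have h2 : ({a, x} : Finset V).card ≤ 2 := Finset.card_insert_le _ _ |>.trans (by simp)
    simp only [Finset.card_univ] at this
    omega
  obtain ⟨y, hcy⟩ := exists_neighbor hG c ⟨a, fun h => hc.1 h.symm⟩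
  refine ⟨s(a, x), G.mem_edgeSet.mpr hax, s(c, y), G.mem_edgeSet.mpr hcy, ?_⟩
  intro h
  rw [Sym2.eq_iff] at h
  rcases h with ⟨h1, h2⟩ | ⟨h1, h2⟩
  · exact hc.1 h1.symm
  · exact hc.2 h2.symm

end SimpleGraph

namespace SimpleGraph

variable {G : SimpleGraph V}

lemma edgeDist_left_zero (G : SimpleGraph V) (a b : V) : G.edgeDist s(a, b) a = 0 := by
  simp [edgeDist_mk, dist_self]

lemma edgeDist_right_zero (G : SimpleGraph V) (a b : V) : G.edgeDist s(a, b) b = 0 := by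
  simp [edgeDist_mk, dist_self]

lemma edgeDist_pos (hG : G.Connected) {c d z : V} (hzc : z ≠ c) (hzd : z ≠ d) :
    0 < G.edgeDist s(c, d) z := by
  rw [edgeDist_mk]
  exact lt_min (hG.pos_dist_of_ne (fun h => hzc h.symm)) (hG.pos_dist_of_ne (fun h => hzd h.symm))

lemma exists_resolver (hG : G.Connected) {e₁ e₂ : Sym2 V} (h₁ : e₁ ∈ G.edgeSet)
    (h₂ : e₂ ∈ G.edgeSet) (hne : e₁ ≠ e₂) : ∃ z, G.edgeDist e₁ z ≠ G.edgeDist e₂ z := by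
  induction e₁ using Sym2.ind with
  | _ a b =>
  induction e₂ using Sym2.ind with
  | _ c d =>
  rw [mem_edgeSet] at h₁ h₂
  by_cases hac : a = c
  · have hbc : b ≠ c := fun h => h₁.ne (hac.trans h.symm)
    have hbd : b ≠ d := by
      rintro rfl
      exact hne (by rw [Sym2.eq_iff]; exact Or.inl ⟨hac, rfl⟩)
    exact ⟨b, by rw [edgeDist_right_zero]; exact (edgeDist_pos hG hbc hbd).ne⟩
  · by_cases had : a = d
    · have hbd : b ≠ d := fun h => h₁.ne (had.trans h.symm)
      have hbc : b ≠ c := by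
        rintro rfl
        exact hne (by rw [Sym2.eq_iff]; exact Or.inr ⟨had, rfl⟩)
      exact ⟨b, by rw [edgeDist_right_zero]; exact (edgeDist_pos hG hbc hbd).ne⟩
    · exact ⟨a, by rw [edgeDist_left_zero]; exact (edgeDist_pos hG hac had).ne⟩

variable [Fintype V]

/-- the constant function 1 is an edge resolving function -/
lemma const_one_resolving (hG : G.Connected) :
    G.IsEdgeResolvingFunction (fun _ => (1 : ℝ)) := by
  refine ⟨fun v => by norm_num, ?_⟩
  intro e₁ h₁ e₂ h₂ hne
  obtain ⟨z, hz⟩ := exists_resolver hG h₁ h₂ hne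
  have hzmem : z ∈ Finset.univ.filter (fun z => G.edgeDist e₁ z ≠ G.edgeDist e₂ z) := by
    simp [hz]
  exact Finset.single_le_sum (f := fun _ => (1:ℝ)) (fun _ _ => by norm_num) hzmem

lemma edimf_set_nonempty (hG : G.Connected) :
    {x | ∃ g : V → ℝ, G.IsEdgeResolvingFunction g ∧ ∑ v, g v = x}.Nonempty :=
  ⟨_, fun _ => (1 : ℝ), const_one_resolving hG, rfl⟩

/-- every resolving function has weight at least 1 (given two distinct edges) -/
lemma one_le_sum_of_resolving (hG : G.Connected) (hn : 3 ≤ Fintype.card V)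
    {g : V → ℝ} (hg : G.IsEdgeResolvingFunction g) : 1 ≤ ∑ v, g v := by
  obtain ⟨e₁, h₁, e₂, h₂, hne⟩ := exists_two_edges hG hn
  calc (1 : ℝ) ≤ ∑ z ∈ Finset.univ.filter (fun z => G.edgeDist e₁ z ≠ G.edgeDist e₂ z), g z :=
        hg.2 e₁ h₁ e₂ h₂ hne
    _ ≤ ∑ v, g v :=
        Finset.sum_le_sum_of_subset_of_nonneg (Finset.filter_subset _ _)
          (fun i _ _ => (hg.1 i).1)

lemma one_le_edimf (hG : G.Connected) (hn : 3 ≤ Fintype.card V) : 1 ≤ G.edimf := by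
  apply le_csInf (edimf_set_nonempty hG)
  rintro x ⟨g, hg, rfl⟩
  exact one_le_sum_of_resolving hG hn hg

end SimpleGraph

namespace SimpleGraph

variable {G : SimpleGraph V} [Fintype V]

lemma edimf_bddBelow :
    BddBelow {x | ∃ g : V → ℝ, G.IsEdgeResolvingFunction g ∧ ∑ v, g v = x} := by
  refine ⟨0, ?_⟩
  rintro x ⟨g, hg, rfl⟩
  exact Finset.sum_nonneg (fun i _ => (hg.1 i).1)

lemma edimf_le_one_of_iso {n : ℕ} (hG : G.Connected) (hn : 3 ≤ Fintype.card V)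
    (φ : G ≃g pathGraph n) : G.edimf ≤ 1 := by
  have hcard : n = Fintype.card V := by
    rw [← Fintype.card_fin n]
    exact Fintype.card_congr φ.toEquiv.symm
  obtain ⟨m, rfl⟩ : ∃ m, n = m + 1 := ⟨n - 1, by omega⟩
  set v₀ : V := φ.symm 0 with hv₀
  set g : V → ℝ := fun v => if v = v₀ then 1 else 0 with hgdef
  have hsum : ∑ v, g v = 1 := by
    rw [hgdef]
    simp
  have hres : G.IsEdgeResolvingFunction g := by
    constructor
    · intro v
      rw [hgdef]
      dsimp only
      split <;> norm_num
    · intro e₁ h₁ e₂ h₂ hne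
      have hmem : v₀ ∈ Finset.univ.filter (fun z => G.edgeDist e₁ z ≠ G.edgeDist e₂ z) := by
        simp only [Finset.mem_filter, Finset.mem_univ, true_and]
        intro heq
        apply hne
        have k₁ : (pathGraph (m+1)).edgeDist (e₁.map φ) 0 = G.edgeDist e₁ v₀ := by
          rw [← iso_edgeDist φ e₁ v₀, hv₀, RelIso.apply_symm_apply]
        have k₂ : (pathGraph (m+1)).edgeDist (e₂.map φ) 0 = G.edgeDist e₂ v₀ := by
          rw [← iso_edgeDist φ e₂ v₀, hv₀, RelIso.apply_symm_apply]
        have := pathGraph_edgeDist_inj (e₁.map φ) (iso_mem_edgeSet φ h₁)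
          (e₂.map φ) (iso_mem_edgeSet φ h₂) (by rw [k₁, k₂, heq])
        exact Sym2.map.injective φ.injective this
      have h1 : g v₀ = 1 := by rw [hgdef]; simp
      calc (1 : ℝ) = g v₀ := h1.symm
        _ ≤ _ := Finset.single_le_sum (fun i _ => by rw [hgdef]; dsimp only; split <;> norm_num)
            hmem
  exact csInf_le edimf_bddBelow ⟨g, hres, hsum⟩

end SimpleGraph

namespace SimpleGraph

variable {G : SimpleGraph V}

lemma edgeDist_adj_bounds (hG : G.Connected) {v a : V} (h : G.Adj v a) (z : V) :
    G.edgeDist s(v, a) z ≤ G.dist v z ∧ G.dist v z ≤ G.edgeDist s(v, a) z + 1 := by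
  rw [edgeDist_mk]
  have htri : G.dist v z ≤ G.dist v a + G.dist a z := hG.dist_triangle
  rw [dist_eq_one_iff_adj.mpr h] at htri
  rcases le_total (G.dist v z) (G.dist a z) with hle | hle
  · rw [min_eq_left hle]; omega
  · rw [min_eq_right hle]; omega

lemma sym2_ne_of_ne {v a b : V} (ha : G.Adj v a) (hb : G.Adj v b) (hab : a ≠ b) :
    s(v, a) ≠ s(v, b) := by
  intro heq
  rw [Sym2.eq_iff] at heq
  rcases heq with ⟨-, h⟩ | ⟨h1, h2⟩
  · exact hab h
  · exact G.irrefl (h1 ▸ hb)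

variable [Fintype V]

lemma three_halves_le (hG : G.Connected) {v a b c : V} (ha : G.Adj v a) (hb : G.Adj v b)
    (hc : G.Adj v c) (hab : a ≠ b) (hac : a ≠ c) (hbc : b ≠ c) {g : V → ℝ}
    (hg : G.IsEdgeResolvingFunction g) : (3 : ℝ) / 2 ≤ ∑ w, g w := by
  classical
  set A := Finset.univ.filter (fun z => G.edgeDist s(v, a) z ≠ G.edgeDist s(v, b) z) with hA
  set B := Finset.univ.filter (fun z => G.edgeDist s(v, a) z ≠ G.edgeDist s(v, c) z) with hB
  set C := Finset.univ.filter (fun z => G.edgeDist s(v, b) z ≠ G.edgeDist s(v, c) z) with hC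
  have h1 : 1 ≤ ∑ z ∈ A, g z :=
    hg.2 _ (G.mem_edgeSet.mpr ha) _ (G.mem_edgeSet.mpr hb) (sym2_ne_of_ne ha hb hab)
  have h2 : 1 ≤ ∑ z ∈ B, g z :=
    hg.2 _ (G.mem_edgeSet.mpr ha) _ (G.mem_edgeSet.mpr hc) (sym2_ne_of_ne ha hc hac)
  have h3 : 1 ≤ ∑ z ∈ C, g z :=
    hg.2 _ (G.mem_edgeSet.mpr hb) _ (G.mem_edgeSet.mpr hc) (sym2_ne_of_ne hb hc hbc)
  have hdisj : Disjoint (A ∩ B) C := by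
    rw [Finset.disjoint_left]
    intro z hz hzC
    rw [hA, hB] at hz
    rw [hC] at hzC
    simp only [Finset.mem_inter, Finset.mem_filter, Finset.mem_univ, true_and] at hz hzC
    have b1 := edgeDist_adj_bounds hG ha z
    have b2 := edgeDist_adj_bounds hG hb z
    have b3 := edgeDist_adj_bounds hG hc z
    omega
  have hnn : ∀ i ∈ Finset.univ, 0 ≤ g i := fun i _ => (hg.1 i).1
  have e1 : ∑ z ∈ A, g z + ∑ z ∈ B, g z = ∑ z ∈ A ∪ B, g z + ∑ z ∈ A ∩ B, g z :=
    (Finset.sum_union_inter).symm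
  have e2 : ∑ z ∈ A ∩ B, g z + ∑ z ∈ C, g z = ∑ z ∈ (A ∩ B) ∪ C, g z :=
    (Finset.sum_union hdisj).symm
  have le1 : ∑ z ∈ A ∪ B, g z ≤ ∑ w, g w :=
    Finset.sum_le_sum_of_subset_of_nonneg (Finset.subset_univ _) (fun i hi _ => (hg.1 i).1)
  have le2 : ∑ z ∈ (A ∩ B) ∪ C, g z ≤ ∑ w, g w :=
    Finset.sum_le_sum_of_subset_of_nonneg (Finset.subset_univ _) (fun i hi _ => (hg.1 i).1)
  linarith

lemma card_le_of_min_degree_two (hG : G.Connected)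
    (hdeg : ∀ v : V, ∃ a b, G.Adj v a ∧ G.Adj v b ∧ a ≠ b) {g : V → ℝ}
    (hg : G.IsEdgeResolvingFunction g) :
    (Fintype.card V : ℝ) ≤ (Fintype.card V - 1) * ∑ w, g w := by
  classical
  choose fa fb hfa hfb hfab using hdeg
  have key : ∀ v : V, (1 : ℝ) ≤ ∑ w, g w - g v := by
    intro v
    set R := Finset.univ.filter
      (fun z => G.edgeDist s(v, fa v) z ≠ G.edgeDist s(v, fb v) z) with hR
    have h1 : 1 ≤ ∑ z ∈ R, g z :=
      hg.2 _ (G.mem_edgeSet.mpr (hfa v)) _ (G.mem_edgeSet.mpr (hfb v))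
        (sym2_ne_of_ne (hfa v) (hfb v) (hfab v))
    have hsub : R ⊆ Finset.univ.erase v := by
      intro z hz
      rw [hR] at hz
      simp only [Finset.mem_filter, Finset.mem_univ, true_and] at hz
      rw [Finset.mem_erase]
      refine ⟨?_, Finset.mem_univ z⟩
      rintro rfl
      rw [edgeDist_left_zero, edgeDist_left_zero] at hz
      exact hz rfl
    have h2 : ∑ z ∈ R, g z ≤ ∑ z ∈ Finset.univ.erase v, g z :=
      Finset.sum_le_sum_of_subset_of_nonneg hsub (fun i _ _ => (hg.1 i).1)
    have h3 : ∑ z ∈ Finset.univ.erase v, g z = ∑ w, g w - g v :=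
      Finset.sum_erase_eq_sub (Finset.mem_univ v)
    linarith
  have total : (Fintype.card V : ℝ) ≤ ∑ v : V, (∑ w, g w - g v) := by
    calc (Fintype.card V : ℝ) = ∑ _v : V, (1 : ℝ) := by simp
      _ ≤ _ := Finset.sum_le_sum (fun v _ => key v)
  rw [Finset.sum_sub_distrib, Finset.sum_const, Finset.card_univ, nsmul_eq_mul] at total
  linarith

end SimpleGraph

namespace SimpleGraph

variable {G : SimpleGraph V}

lemma exists_pred (hG : G.Connected) (v₀ : V) {k : ℕ} {a : V} (hd : G.dist v₀ a = k + 1) :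
    ∃ y, G.Adj y a ∧ G.dist v₀ y = k := by
  obtain ⟨p, hp⟩ := (hG v₀ a).exists_walk_length_eq_dist
  have hne : a ≠ v₀ := by rintro rfl; rw [dist_self] at hd; omega
  obtain ⟨y, hadj, q, hq⟩ := Walk.exists_eq_cons_of_ne hne p.reverse
  have hlq : q.length = k := by
    have h := congrArg Walk.length hq
    rw [Walk.length_reverse, hp, hd, Walk.length_cons] at h
    omega
  have hle : G.dist v₀ y ≤ k := by
    calc G.dist v₀ y = G.dist y v₀ := dist_comm
      _ ≤ q.length := dist_le q
      _ = k := hlq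
  have hge : k ≤ G.dist v₀ y := by
    have tri : G.dist v₀ a ≤ G.dist v₀ y + G.dist y a := hG.dist_triangle
    rw [dist_eq_one_iff_adj.mpr hadj.symm] at tri
    omega
  exact ⟨y, hadj.symm, le_antisymm hle hge⟩

lemma dist_attained (hG : G.Connected) (v₀ : V) :
    ∀ k j : ℕ, j ≤ k → (∃ u, G.dist v₀ u = k) → ∃ u, G.dist v₀ u = j := by
  intro k
  induction k with
  | zero =>
    intro j hj hu
    exact (Nat.le_zero.mp hj) ▸ hu
  | succ k ih =>
    intro j hj ⟨u, hu⟩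
    rcases Nat.lt_or_ge j (k + 1) with hlt | hge
    · obtain ⟨y, -, hy⟩ := exists_pred hG v₀ hu
      exact ih j (by omega) ⟨y, hy⟩
    · exact ⟨u, by omega⟩

lemma fiber_subsingleton (hG : G.Connected)
    (h2 : ∀ w x y z : V, G.Adj w x → G.Adj w y → G.Adj w z → x = y ∨ x = z ∨ y = z)
    (v₀ : V) (h1 : ∀ x y, G.Adj v₀ x → G.Adj v₀ y → x = y) :
    ∀ k : ℕ, ∀ a b : V, G.dist v₀ a = k → G.dist v₀ b = k → a = b := by
  intro k
  induction k with
  | zero =>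
    intro a b ha hb
    have ha' : v₀ = a := (hG.dist_eq_zero_iff).mp ha
    have hb' : v₀ = b := (hG.dist_eq_zero_iff).mp hb
    exact ha' ▸ hb'
  | succ k ih =>
    intro a b ha hb
    obtain ⟨ya, hya, hda⟩ := exists_pred hG v₀ ha
    obtain ⟨yb, hyb, hdb⟩ := exists_pred hG v₀ hb
    have hw : ya = yb := ih ya yb hda hdb
    subst hw
    rcases Nat.eq_zero_or_pos k with rfl | hk
    · have : v₀ = ya := (hG.dist_eq_zero_iff).mp hda
      subst this
      exact h1 a b hya hyb
    · obtain ⟨m, rfl⟩ : ∃ m, k = m + 1 := ⟨k - 1, by omega⟩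
      obtain ⟨u, hu, hdu⟩ := exists_pred hG v₀ hda
      rcases h2 ya a b u hya hyb hu.symm with h | h | h
      · exact h
      · exfalso; rw [h] at ha; omega
      · exfalso; rw [h] at hb; omega

lemma iso_path_of_degrees [Fintype V] (hG : G.Connected) (hn : 3 ≤ Fintype.card V)
    (h2 : ∀ w x y z : V, G.Adj w x → G.Adj w y → G.Adj w z → x = y ∨ x = z ∨ y = z)
    (v₀ : V) (h1 : ∀ x y, G.Adj v₀ x → G.Adj v₀ y → x = y) :
    Nonempty (G ≃g pathGraph (Fintype.card V)) := by
  classical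
  set n := Fintype.card V with hn'
  set f : V → ℕ := fun v => G.dist v₀ v with hf
  have hinj : Function.Injective f := fun a b h =>
    fiber_subsingleton hG h2 v₀ h1 (f b) a b h rfl
  have hlt : ∀ v, f v < n := by
    intro v
    have hsub : Finset.range (f v + 1) ⊆ Finset.univ.image f := by
      intro j hj
      rw [Finset.mem_range] at hj
      obtain ⟨u, hu⟩ := dist_attained hG v₀ (f v) j (by omega) ⟨v, rfl⟩
      exact Finset.mem_image.mpr ⟨u, Finset.mem_univ u, hu⟩
    have hcard := Finset.card_le_card hsub
    rw [Finset.card_range, Finset.card_image_of_injective _ hinj, Finset.card_univ] at hcard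
    omega
  set e : V → Fin n := fun v => ⟨f v, hlt v⟩ with he
  have heinj : Function.Injective e := by
    intro a b h
    apply hinj
    exact congrArg Fin.val h
  have hbij : Function.Bijective e :=
    (Fintype.bijective_iff_injective_and_card e).mpr ⟨heinj, by simp [hn']⟩
  refine ⟨⟨Equiv.ofBijective e hbij, ?_⟩⟩
  intro a b
  show (pathGraph n).Adj (e a) (e b) ↔ G.Adj a b
  rw [pathGraph_adj]
  constructor
  · rintro (h | h)
    · obtain ⟨y, hy, hdy⟩ := exists_pred hG v₀ (a := b) (k := f a) (by simpa using h.symm)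
      have : y = a := hinj (by rw [hf] at hdy ⊢; exact hdy)
      exact this ▸ hy
    · obtain ⟨y, hy, hdy⟩ := exists_pred hG v₀ (a := a) (k := f b) (by simpa using h.symm)
      have : y = b := hinj (by rw [hf] at hdy ⊢; exact hdy)
      exact (this ▸ hy).symm
  · intro hadj
    have t1 : G.dist v₀ b ≤ G.dist v₀ a + 1 := by
      have := hG.dist_triangle (u := v₀) (v := a) (w := b)
      rw [dist_eq_one_iff_adj.mpr hadj] at this
      omega
    have t2 : G.dist v₀ a ≤ G.dist v₀ b + 1 := by
      have := hG.dist_triangle (u := v₀) (v := b) (w := a)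
      rw [dist_eq_one_iff_adj.mpr hadj.symm] at this
      omega
    have hne : f a ≠ f b := fun h => hadj.ne (hinj h)
    have hne' : G.dist v₀ a ≠ G.dist v₀ b := hne
    show (e a).val + 1 = (e b).val ∨ (e b).val + 1 = (e a).val
    change G.dist v₀ a + 1 = G.dist v₀ b ∨ G.dist v₀ b + 1 = G.dist v₀ a
    omega

end SimpleGraph


/-- For a connected graph of order `n ≥ 3`, `edim_f(G) = 1` iff `G` is a path. -/
theorem stmt_9 [Fintype V] (G : SimpleGraph V) (hG : G.Connected)
    (hn : 3 ≤ Fintype.card V) :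
    G.edimf = 1 ↔ Nonempty (G ≃g SimpleGraph.pathGraph (Fintype.card V)) := by
  constructor
  · intro hed
    have hinf : sInf {x | ∃ g : V → ℝ, G.IsEdgeResolvingFunction g ∧ ∑ v, g v = x} = 1 := hed
    have h2 : ∀ w x y z : V, G.Adj w x → G.Adj w y → G.Adj w z → x = y ∨ x = z ∨ y = z := by
      by_contra hcon
      push_neg at hcon
      obtain ⟨w, x, y, z, hx, hy, hz, hxy, hxz, hyz⟩ := hcon
      obtain ⟨s, hs, hlt⟩ := Real.lt_sInf_add_pos
        (s := {x | ∃ g : V → ℝ, G.IsEdgeResolvingFunction g ∧ ∑ v, g v = x})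
        (G.edimf_set_nonempty hG) (ε := 1/2) (by norm_num)
      rw [hinf] at hlt
      obtain ⟨g, hg, rfl⟩ := hs
      have := G.three_halves_le hG hx hy hz hxy hxz hyz hg
      linarith
    have h1 : ∃ v₀ : V, ∀ x y, G.Adj v₀ x → G.Adj v₀ y → x = y := by
      by_contra hcon
      push_neg at hcon
      have hdeg : ∀ v : V, ∃ a b, G.Adj v a ∧ G.Adj v b ∧ a ≠ b := by
        intro v
        obtain ⟨a, b, ha, hb, hne⟩ := hcon v
        exact ⟨a, b, ha, hb, hne⟩
      set N : ℝ := (Fintype.card V : ℝ) with hN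
      have hN3 : (3 : ℝ) ≤ N := by rw [hN]; exact_mod_cast hn
      have hε : (0 : ℝ) < N / (N - 1) - 1 := by
        rw [sub_pos]
        rw [lt_div_iff₀ (by linarith)]
        linarith
      obtain ⟨s, hs, hlt⟩ := Real.lt_sInf_add_pos
        (s := {x | ∃ g : V → ℝ, G.IsEdgeResolvingFunction g ∧ ∑ v, g v = x})
        (G.edimf_set_nonempty hG) hε
      rw [hinf] at hlt
      obtain ⟨g, hg, rfl⟩ := hs
      have hbound := G.card_le_of_min_degree_two hG hdeg hg
      rw [← hN] at hbound
      have : N / (N - 1) ≤ ∑ v, g v := by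
        rw [div_le_iff₀ (by linarith)]
        linarith
      linarith
    obtain ⟨v₀, h1⟩ := h1
    exact G.iso_path_of_degrees hG hn h2 v₀ h1
  · rintro ⟨φ⟩
    exact le_antisymm (G.edimf_le_one_of_iso hG hn φ) (G.one_le_edimf hG hn)
end

section
/- For the complete graph K_n with n ≥ 3, edim_f(K_n) = n/2. -/
open Finset
open scoped Classical

variable {V : Type*}

lemma top_edgeDist {n : ℕ} (a b z : Fin n) (h : a ≠ b) :
    (⊤ : SimpleGraph (Fin n)).edgeDist s(a,b) z = if z = a ∨ z = b then 0 else 1 := by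
  have hd : ∀ x y : Fin n, (⊤ : SimpleGraph (Fin n)).dist x y = if x = y then 0 else 1 := by
    intro x y
    split
    · simp [*]
    · rw [SimpleGraph.dist_eq_one_iff_adj]; simpa [SimpleGraph.top_adj]
  simp only [SimpleGraph.edgeDist, Sym2.lift_mk, hd]
  rcases eq_or_ne z a with rfl|ha
  · simp
  rcases eq_or_ne z b with rfl|hb
  · simp
  simp [ha, hb, Ne.symm ha, Ne.symm hb]

lemma exists_sep {n : ℕ} {a b c d : Fin n} (hab : a ≠ b) (hcd : c ≠ d)
    (hne : s(a,b) ≠ s(c,d)) : ∃ x, (x = a ∨ x = b) ∧ ¬(x = c ∨ x = d) := by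
  by_contra h; push_neg at h
  have h1 := h a (Or.inl rfl)
  have h2 := h b (Or.inr rfl)
  apply hne; rw [Sym2.eq_iff]
  rcases h1 with rfl|rfl <;> rcases h2 with rfl|rfl <;> tauto

lemma half_resolving {n : ℕ} (hn : 3 ≤ n) :
    (⊤ : SimpleGraph (Fin n)).IsEdgeResolvingFunction (fun _ => (1:ℝ)/2) := by
  constructor
  · intro v; norm_num
  · intro e₁ he₁ e₂ he₂ hne
    induction e₁ using Sym2.ind with | _ a b =>
    induction e₂ using Sym2.ind with | _ c d =>
    rw [SimpleGraph.mem_edgeSet, SimpleGraph.top_adj] at he₁ he₂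
    obtain ⟨x, hx1, hx2⟩ := exists_sep he₁ he₂ hne
    obtain ⟨y, hy1, hy2⟩ := exists_sep he₂ he₁ hne.symm
    have hxy : x ≠ y := by rintro rfl; tauto
    have hmx : x ∈ Finset.univ.filter
        (fun z => (⊤ : SimpleGraph (Fin n)).edgeDist s(a,b) z ≠ (⊤ : SimpleGraph (Fin n)).edgeDist s(c,d) z) := by
      simp only [mem_filter, mem_univ, true_and, top_edgeDist _ _ _ he₁, top_edgeDist _ _ _ he₂]
      simp [hx1, hx2]
    have hmy : y ∈ Finset.univ.filter
        (fun z => (⊤ : SimpleGraph (Fin n)).edgeDist s(a,b) z ≠ (⊤ : SimpleGraph (Fin n)).edgeDist s(c,d) z) := by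
      simp only [mem_filter, mem_univ, true_and, top_edgeDist _ _ _ he₁, top_edgeDist _ _ _ he₂]
      simp [hy1, hy2]
    have hcard : 1 < (Finset.univ.filter
        (fun z => (⊤ : SimpleGraph (Fin n)).edgeDist s(a,b) z ≠ (⊤ : SimpleGraph (Fin n)).edgeDist s(c,d) z)).card :=
      Finset.one_lt_card.mpr ⟨x, hmx, y, hmy, hxy⟩
    rw [Finset.sum_const, nsmul_eq_mul]
    have h2 : (2:ℝ) ≤ (Finset.univ.filter
        (fun z => (⊤ : SimpleGraph (Fin n)).edgeDist s(a,b) z ≠ (⊤ : SimpleGraph (Fin n)).edgeDist s(c,d) z)).card := by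
      exact_mod_cast hcard
    linarith

lemma pair_bound {n : ℕ} (hn : 3 ≤ n) {g : Fin n → ℝ}
    (hg : (⊤ : SimpleGraph (Fin n)).IsEdgeResolvingFunction g) :
    ∀ u v : Fin n, u ≠ v → 1 ≤ g u + g v := by
  intro u v huv
  have hw : (({u, v} : Finset (Fin n))ᶜ).Nonempty := by
    rw [← Finset.card_pos, Finset.card_compl]
    have h1 : ({u, v} : Finset (Fin n)).card ≤ 2 := Finset.card_insert_le u {v} |>.trans (by simp)
    simp only [Fintype.card_fin]
    omega
  obtain ⟨w, hw⟩ := hw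
  simp only [Finset.mem_compl, Finset.mem_insert, Finset.mem_singleton, not_or] at hw
  obtain ⟨hwu, hwv⟩ := hw
  have he₁ : s(u,w) ∈ (⊤ : SimpleGraph (Fin n)).edgeSet := by
    simp [SimpleGraph.mem_edgeSet, Ne.symm hwu]
  have he₂ : s(v,w) ∈ (⊤ : SimpleGraph (Fin n)).edgeSet := by
    simp [SimpleGraph.mem_edgeSet, Ne.symm hwv]
  have hne : s(u,w) ≠ s(v,w) := by
    intro h; rw [Sym2.eq_iff] at h
    rcases h with ⟨h1, _⟩ | ⟨h1, _⟩
    · exact huv h1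
    · exact hwu h1.symm
  have key := hg.2 _ he₁ _ he₂ hne
  have hfil : Finset.univ.filter
      (fun z => (⊤ : SimpleGraph (Fin n)).edgeDist s(u,w) z ≠ (⊤ : SimpleGraph (Fin n)).edgeDist s(v,w) z)
      = {u, v} := by
    ext z
    simp only [mem_filter, mem_univ, true_and, top_edgeDist _ _ _ (Ne.symm hwu),
      top_edgeDist _ _ _ (Ne.symm hwv), Finset.mem_insert, Finset.mem_singleton]
    rcases eq_or_ne z u with rfl|hzu <;> rcases eq_or_ne z v with rfl|hzv <;>
      rcases eq_or_ne z w with rfl|hzw <;> simp_all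
  rw [hfil, Finset.sum_insert (by simpa using huv), Finset.sum_singleton] at key
  exact key

/-- For the complete graph `K_n` with `n ≥ 3`, `edim_f(K_n) = n / 2`. -/
theorem stmt_10 (n : ℕ) (hn : 3 ≤ n) :
    (⊤ : SimpleGraph (Fin n)).edimf = (n : ℝ) / 2 := by
  have hmem : (n : ℝ) / 2 ∈ {x | ∃ g : Fin n → ℝ,
      (⊤ : SimpleGraph (Fin n)).IsEdgeResolvingFunction g ∧ ∑ v, g v = x} := by
    refine ⟨fun _ => (1:ℝ)/2, half_resolving hn, ?_⟩
    simp [Finset.sum_const, Fintype.card_fin]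
    ring
  have hlb : ∀ x ∈ {x | ∃ g : Fin n → ℝ,
      (⊤ : SimpleGraph (Fin n)).IsEdgeResolvingFunction g ∧ ∑ v, g v = x}, (n : ℝ) / 2 ≤ x := by
    rintro x ⟨g, hg, rfl⟩
    have key := pair_bound hn hg
    set S := ∑ v, g v with hS
    have hsum : (n : ℝ) * ((n : ℝ) - 1) ≤ (2 * (n : ℝ) - 2) * S := by
      have step1 : ∀ u : Fin n, ((n : ℝ) - 1) ≤ ∑ v ∈ Finset.univ.erase u, (g u + g v) := by
        intro u
        calc ((n : ℝ) - 1) = ∑ _v ∈ Finset.univ.erase u, (1 : ℝ) := by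
              rw [Finset.sum_const, Finset.card_erase_of_mem (mem_univ u)]
              simp only [Finset.card_univ, Fintype.card_fin, nsmul_eq_mul, mul_one]
              rw [Nat.cast_sub (by omega), Nat.cast_one]
          _ ≤ _ := Finset.sum_le_sum fun v hv => key u v (Ne.symm (Finset.ne_of_mem_erase hv))
      have step2 : ∀ u : Fin n, ∑ v ∈ Finset.univ.erase u, (g u + g v)
          = ((n : ℝ) - 1) * g u + (S - g u) := by
        intro u
        rw [Finset.sum_add_distrib, Finset.sum_const, Finset.card_erase_of_mem (mem_univ u),
          Finset.sum_erase_eq_sub (mem_univ u)]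
        simp only [Finset.card_univ, Fintype.card_fin, nsmul_eq_mul]
        rw [Nat.cast_sub (by omega), Nat.cast_one]
      have := Finset.sum_le_sum (fun u (_ : u ∈ (univ : Finset (Fin n))) => step1 u)
      rw [Finset.sum_const] at this
      simp only [Finset.card_univ, Fintype.card_fin, nsmul_eq_mul] at this
      calc (n : ℝ) * ((n : ℝ) - 1) ≤ ∑ u, ∑ v ∈ Finset.univ.erase u, (g u + g v) := this
        _ = ∑ u, (((n : ℝ) - 1) * g u + (S - g u)) := by
              exact Finset.sum_congr rfl fun u _ => step2 u
        _ = (2 * (n : ℝ) - 2) * S := by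
              rw [Finset.sum_add_distrib, ← Finset.mul_sum, Finset.sum_sub_distrib,
                Finset.sum_const]
              simp only [Finset.card_univ, Fintype.card_fin, nsmul_eq_mul, ← hS]
              ring
    have hn' : (3 : ℝ) ≤ (n : ℝ) := by exact_mod_cast hn
    nlinarith
  exact le_antisymm (csInf_le ⟨(n : ℝ) / 2, hlb⟩ hmem) (le_csInf ⟨_, hmem⟩ hlb)
end

section
/- For the cycle C_n with n ≥ 3 odd, edim_f(C_n) = n/(n−1). -/
open Finset
open scoped Classical

variable {V : Type*}

namespace CycleAux

variable {n : ℕ}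
open Fin.CommRing

lemma val1 [NeZero n] (hn : 3 ≤ n) : ((1 : Fin n)).val = 1 := by
  rw [Fin.val_one' n]; exact Nat.mod_eq_of_lt (by omega)

lemma mod_aux (hn : 3 ≤ n) {x : ℕ} (hx : x < n) :
    (n - 1 + x) % n = if x = 0 then n - 1 else x - 1 := by
  split_ifs with h
  · rw [h, Nat.add_zero]; exact Nat.mod_eq_of_lt (by omega)
  · have h2 : n - 1 + x = n + (x - 1) := by omega
    rw [h2, Nat.add_mod_left]; exact Nat.mod_eq_of_lt (by omega)

lemma sub_one_val [NeZero n] (hn : 3 ≤ n) (x : Fin n) :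
    (x - 1).val = if x.val = 0 then n - 1 else x.val - 1 := by
  rw [Fin.sub_def, val1 hn]
  show (n - 1 + x.val) % n = _
  exact mod_aux hn x.isLt

lemma add_one_sub [NeZero n] (i j : Fin n) : j - (i + 1) = (j - i) - 1 := by ring

lemma neg_val [NeZero n] (x : Fin n) : (-x).val = (n - x.val) % n := by
  rw [Fin.neg_def]

lemma sub_rev_val [NeZero n] (i j : Fin n) : (i - j).val = (n - (j - i).val) % n := by
  have h : i - j = -(j - i) := by ring
  rw [h, neg_val]

lemma sub_rev_val' [NeZero n] (i j : Fin n) :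
    (i - j).val = if (j - i).val = 0 then 0 else n - (j - i).val := by
  rw [sub_rev_val]
  have := (j - i).isLt
  split_ifs with h
  · rw [h]; simp
  · exact Nat.mod_eq_of_lt (by omega)

lemma adj_succ [NeZero n] (hn : 3 ≤ n) (i : Fin n) :
    (SimpleGraph.cycleGraph n).Adj i (i + 1) := by
  rw [SimpleGraph.cycleGraph_adj']
  right
  have h : i + 1 - i = 1 := by ring
  rw [h, val1 hn]

lemma exists_walk_fwd [NeZero n] (hn : 3 ≤ n) :
    ∀ (a : ℕ) (i j : Fin n), (j - i).val = a →
      ∃ p : (SimpleGraph.cycleGraph n).Walk i j, p.length = a := by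
  intro a
  induction a with
  | zero =>
    intro i j h
    have h2 : j = i := sub_eq_zero.mp (Fin.ext h)
    subst h2
    exact ⟨SimpleGraph.Walk.nil, rfl⟩
  | succ a ih =>
    intro i j h
    have h2 : (j - (i + 1)).val = a := by
      rw [add_one_sub, sub_one_val hn, h]
      simp
    obtain ⟨p, hp⟩ := ih (i + 1) j h2
    exact ⟨SimpleGraph.Walk.cons (adj_succ hn i) p, by simp [hp]⟩

lemma dist_le_fwd [NeZero n] (hn : 3 ≤ n) (i j : Fin n) :
    (SimpleGraph.cycleGraph n).dist i j ≤ (j - i).val := by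
  obtain ⟨p, hp⟩ := exists_walk_fwd hn _ i j rfl
  exact hp ▸ SimpleGraph.dist_le p

lemma dist_le_bwd [NeZero n] (hn : 3 ≤ n) (i j : Fin n) :
    (SimpleGraph.cycleGraph n).dist i j ≤ (i - j).val := by
  obtain ⟨p, hp⟩ := exists_walk_fwd hn _ j i rfl
  exact hp ▸ (SimpleGraph.dist_comm ▸ SimpleGraph.dist_le p)

lemma step_nat (hn : 3 ≤ n) {A B L : ℕ} (hA : A < n) (hB : B < n)
    (key : A = (if B = 0 then n - 1 else B - 1) ∨ B = (if A = 0 then n - 1 else A - 1))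
    (ih : min B (if B = 0 then 0 else n - B) ≤ L) :
    min A (if A = 0 then 0 else n - A) ≤ L + 1 := by
  split_ifs at * <;> omega

lemma walk_lb [NeZero n] (hn : 3 ≤ n) {i j : Fin n} (p : (SimpleGraph.cycleGraph n).Walk i j) :
    min ((j - i).val) ((i - j).val) ≤ p.length := by
  induction p with
  | nil => simp
  | @cons u k j hadj p ih =>
    rw [SimpleGraph.Walk.length_cons]
    have hA := (j - u).isLt
    have hB := (j - k).isLt
    have key : (j - u).val = (if (j-k).val = 0 then n-1 else (j-k).val - 1)
        ∨ (j - k).val = (if (j-u).val = 0 then n-1 else (j-u).val - 1) := by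
      rw [SimpleGraph.cycleGraph_adj'] at hadj
      rcases hadj with h1 | h1
      · have h2 : u = k + 1 := by
          have h3 : u - k = 1 := Fin.ext (by rw [h1, val1 hn])
          have h4 := sub_eq_iff_eq_add.mp h3
          rw [h4]; ring
        left
        rw [h2, add_one_sub, sub_one_val hn]
      · have h2 : k = u + 1 := by
          have h3 : k - u = 1 := Fin.ext (by rw [h1, val1 hn])
          have h4 := sub_eq_iff_eq_add.mp h3
          rw [h4]; ring
        right
        rw [h2, add_one_sub, sub_one_val hn]
    rw [sub_rev_val' u j]
    rw [sub_rev_val' k j] at ih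
    exact step_nat hn hA hB key ih

lemma cycle_connected (hn : 3 ≤ n) : (SimpleGraph.cycleGraph n).Connected := by
  obtain ⟨m, rfl⟩ : ∃ m, n = m + 1 := ⟨n - 1, by omega⟩
  exact SimpleGraph.cycleGraph_connected

lemma dist_eq [NeZero n] (hn : 3 ≤ n) (i j : Fin n) :
    (SimpleGraph.cycleGraph n).dist i j = min ((j - i).val) ((i - j).val) := by
  apply le_antisymm
  · exact le_min (dist_le_fwd hn i j) (dist_le_bwd hn i j)
  · obtain ⟨p, hp⟩ := ((cycle_connected hn).exists_walk_length_eq_dist i j)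
    exact hp ▸ walk_lb hn p


/-- numeric edge distance function -/
def E (n a : ℕ) : ℕ := min (a - 1) (n - a)

lemma edgeDist_eq [NeZero n] (hn : 3 ≤ n) (i v : Fin n) :
    (SimpleGraph.cycleGraph n).edgeDist s(i, i + 1) v = E n ((v - i).val) := by
  show min ((SimpleGraph.cycleGraph n).dist i v) ((SimpleGraph.cycleGraph n).dist (i+1) v) = _
  rw [dist_eq hn, dist_eq hn]
  rw [sub_rev_val' i v, sub_rev_val' (i+1) v]
  have h1 : v - (i + 1) = (v - i) - 1 := add_one_sub i v
  rw [h1, sub_one_val hn]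
  have hA := (v - i).isLt
  unfold E
  split_ifs <;> omega

/-- key: when do two edges have equal distance to v -/
lemma E_eq_iff (hn : 3 ≤ n) {a b : ℕ} (ha : a < n) (hb : b < n) (hab : a ≠ b) :
    E n a = E n b ↔ a + b = 1 ∨ a + b = n + 1 := by
  unfold E; omega


lemma eq_dist_iff [NeZero n] (hn : 3 ≤ n) {i j : Fin n} (hij : i ≠ j) (v : Fin n) :
    (SimpleGraph.cycleGraph n).edgeDist s(i, i + 1) v
      = (SimpleGraph.cycleGraph n).edgeDist s(j, j + 1) v ↔ v + v = i + j + 1 := by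
  rw [edgeDist_eq hn, edgeDist_eq hn]
  have hab : (v - i).val ≠ (v - j).val := by
    intro h
    exact hij (by
      have h2 : v - i = v - j := Fin.ext h
      have := sub_right_injective h2
      exact this.symm ▸ rfl)
  rw [E_eq_iff hn (v - i).isLt (v - j).isLt hab]
  have hkey : (v - i).val + (v - j).val = 1 ∨ (v - i).val + (v - j).val = n + 1 ↔
      (v - i) + (v - j) = 1 := by
    rw [Fin.ext_iff, Fin.val_add, val1 hn]
    have h1 := (v - i).isLt
    have h2 := (v - j).isLt
    constructor
    · rintro (h | h) <;> rw [h]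
      · exact Nat.mod_eq_of_lt (by omega)
      · show (n + 1) % n = 1
        rw [Nat.add_mod_left]; exact Nat.mod_eq_of_lt (by omega)
    · intro h
      rcases Nat.lt_or_ge ((v - i).val + (v - j).val) n with h3 | h3
      · left; rw [Nat.mod_eq_of_lt h3] at h; exact h
      · right
        have h4 : (v-i).val + (v-j).val - n < n := by omega
        have h5 : ((v-i).val + (v-j).val) % n = (v-i).val + (v-j).val - n := by
          conv_lhs => rw [show (v-i).val + (v-j).val = n + ((v-i).val + (v-j).val - n) by omega]
          rw [Nat.add_mod_left]; exact Nat.mod_eq_of_lt h4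
        omega
  rw [hkey]
  constructor
  · intro h; linear_combination h
  · intro h; linear_combination h

lemma double_inj [NeZero n] (hodd : Odd n) {v w : Fin n} (h : v + v = w + w) : v = w := by
  have hval : (v.val + v.val) % n = (w.val + w.val) % n := by
    have := congrArg Fin.val h
    rwa [Fin.val_add, Fin.val_add] at this
  have hmod : Nat.ModEq n (2 * v.val) (2 * w.val) := by
    unfold Nat.ModEq
    rw [two_mul, two_mul]
    exact hval
  have hcop : Nat.gcd n 2 = 1 := by
    rcases hodd with ⟨k, hk⟩
    have h2 : n % 2 = 1 := by omega
    rw [Nat.gcd_comm, Nat.gcd_rec, h2, Nat.gcd_one_left]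
  have := Nat.ModEq.cancel_left_of_coprime hcop hmod
  exact Fin.ext (by rwa [Nat.ModEq, Nat.mod_eq_of_lt v.isLt, Nat.mod_eq_of_lt w.isLt] at this)

lemma edge_repr [NeZero n] (hn : 3 ≤ n) {e : Sym2 (Fin n)}
    (he : e ∈ (SimpleGraph.cycleGraph n).edgeSet) : ∃ i : Fin n, e = s(i, i + 1) := by
  induction e with
  | _ u v =>
    rw [SimpleGraph.mem_edgeSet, SimpleGraph.cycleGraph_adj'] at he
    rcases he with h | h
    · refine ⟨v, ?_⟩
      have h2 : u = v + 1 := by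
        have h3 : u - v = 1 := Fin.ext (by rw [h, val1 hn])
        have h4 := sub_eq_iff_eq_add.mp h3
        rw [h4]; ring
      rw [h2, Sym2.eq_swap]
    · refine ⟨u, ?_⟩
      have h2 : v = u + 1 := by
        have h3 : v - u = 1 := Fin.ext (by rw [h, val1 hn])
        have h4 := sub_eq_iff_eq_add.mp h3
        rw [h4]; ring
      rw [h2]

lemma edge_repr_inj [NeZero n] (hn : 3 ≤ n) {i j : Fin n}
    (h : s(i, i + 1) = s(j, (j : Fin n) + 1)) : i = j := by
  rw [Sym2.eq_iff] at h
  rcases h with ⟨h1, _⟩ | ⟨h1, h2⟩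
  · exact h1
  · exfalso
    have h3 : i = i + (1 + 1) := by rw [← add_assoc, h2, h1]
    have h4 := (left_eq_add.mp h3)
    have h5 := congrArg Fin.val h4
    rw [Fin.val_add, val1 hn, Fin.val_zero, Nat.mod_eq_of_lt (by omega)] at h5
    omega

end CycleAux

open Fin.CommRing

open SimpleGraph in
/-- For the odd cycle `C_n`, `n ≥ 3`, `edim_f(C_n) = n / (n - 1)`. -/
theorem stmt_11 (n : ℕ) (hn : 3 ≤ n) (hodd : Odd n) :
    (SimpleGraph.cycleGraph n).edimf = (n : ℝ) / ((n : ℝ) - 1) := by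
  haveI : NeZero n := ⟨by omega⟩
  have hnR : (3 : ℝ) ≤ (n : ℝ) := by exact_mod_cast hn
  set S : Set ℝ :=
    {x | ∃ g : Fin n → ℝ, (SimpleGraph.cycleGraph n).IsEdgeResolvingFunction g ∧ ∑ v, g v = x}
    with hS
  have huniq : ∀ {i j : Fin n}, i ≠ j → ∀ v w : Fin n,
      (SimpleGraph.cycleGraph n).edgeDist s(i,i+1) v
        = (SimpleGraph.cycleGraph n).edgeDist s(j,j+1) v →
      (SimpleGraph.cycleGraph n).edgeDist s(i,i+1) w
        = (SimpleGraph.cycleGraph n).edgeDist s(j,j+1) w →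
      v = w := by
    intro i j hij v w hv hw
    rw [CycleAux.eq_dist_iff hn hij] at hv hw
    exact CycleAux.double_inj hodd (hv.trans hw.symm)
  have hmem : (n:ℝ)/((n:ℝ)-1) ∈ S := by
    refine ⟨fun _ => ((n:ℝ)-1)⁻¹, ⟨fun v => ⟨inv_nonneg.mpr (by linarith), ?_⟩, ?_⟩, ?_⟩
    · rw [inv_le_one_iff₀]; right; linarith
    · intro e1 he1 e2 he2 hne
      obtain ⟨i, rfl⟩ := CycleAux.edge_repr hn he1
      obtain ⟨j, rfl⟩ := CycleAux.edge_repr hn he2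
      have hij : i ≠ j := fun h => hne (by rw [h])
      have hcard : (Finset.univ.filter (fun z =>
          ¬ ((SimpleGraph.cycleGraph n).edgeDist s(i,i+1) z
            ≠ (SimpleGraph.cycleGraph n).edgeDist s(j,j+1) z))).card ≤ 1 := by
        apply Finset.card_le_one.mpr
        intro v hv w hw
        simp only [Finset.mem_filter, not_not] at hv hw
        exact huniq hij v w hv.2 hw.2
      have htot := Finset.card_filter_add_card_filter_not
        (s := (Finset.univ : Finset (Fin n)))
        (p := fun z => (SimpleGraph.cycleGraph n).edgeDist s(i,i+1) z
            ≠ (SimpleGraph.cycleGraph n).edgeDist s(j,j+1) z)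
      rw [Finset.card_univ, Fintype.card_fin] at htot
      rw [Finset.sum_const, nsmul_eq_mul]
      have hF : n - 1 ≤ (Finset.univ.filter (fun z =>
          (SimpleGraph.cycleGraph n).edgeDist s(i,i+1) z
            ≠ (SimpleGraph.cycleGraph n).edgeDist s(j,j+1) z)).card := by omega
      have hcast : ((n:ℝ) - 1) ≤ ((Finset.univ.filter (fun z =>
          (SimpleGraph.cycleGraph n).edgeDist s(i,i+1) z
            ≠ (SimpleGraph.cycleGraph n).edgeDist s(j,j+1) z)).card : ℝ) := by
        have h2 : ((n - 1 : ℕ) : ℝ) ≤ _ := Nat.cast_le.mpr hF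
        rw [Nat.cast_sub (by omega)] at h2
        simpa using h2
      calc (1:ℝ) = ((n:ℝ)-1) * ((n:ℝ)-1)⁻¹ := (mul_inv_cancel₀ (by linarith)).symm
        _ ≤ _ := mul_le_mul_of_nonneg_right hcast (inv_nonneg.mpr (by linarith))
    · rw [Finset.sum_const, Finset.card_univ, Fintype.card_fin, nsmul_eq_mul, div_eq_mul_inv]
  have hlb : ∀ x ∈ S, (n:ℝ)/((n:ℝ)-1) ≤ x := by
    rintro x ⟨g, ⟨hg01, hres⟩, rfl⟩
    have key : ∀ i : Fin n, 1 + g (i+1) ≤ ∑ v, g v := by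
      intro i
      have hij : i ≠ i + 1 := by
        intro h
        have h2 := congrArg Fin.val (left_eq_add.mp h)
        rw [CycleAux.val1 hn, Fin.val_zero] at h2
        omega
      have hne : s(i, i+1) ≠ s(i+1, (i+1)+1) := fun h => hij (CycleAux.edge_repr_inj hn h)
      have he1 : s(i, i+1) ∈ (SimpleGraph.cycleGraph n).edgeSet :=
        ((SimpleGraph.cycleGraph n).mem_edgeSet).mpr (CycleAux.adj_succ hn i)
      have he2 : s(i+1, (i+1)+1) ∈ (SimpleGraph.cycleGraph n).edgeSet :=
        ((SimpleGraph.cycleGraph n).mem_edgeSet).mpr (CycleAux.adj_succ hn (i+1))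
      have h1 := hres _ he1 _ he2 hne
      have hzero1 : (SimpleGraph.cycleGraph n).edgeDist s(i,i+1) (i+1)
          = (SimpleGraph.cycleGraph n).edgeDist s(i+1,(i+1)+1) (i+1) := by
        rw [CycleAux.edgeDist_eq hn, CycleAux.edgeDist_eq hn,
          show i+1-i = 1 from by ring, show i+1-(i+1) = 0 from by ring,
          CycleAux.val1 hn, Fin.val_zero]
        unfold CycleAux.E
        omega
      have hsub : (Finset.univ.filter (fun z =>
          (SimpleGraph.cycleGraph n).edgeDist s(i,i+1) z
            ≠ (SimpleGraph.cycleGraph n).edgeDist s(i+1,(i+1)+1) z))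
          ⊆ Finset.univ.erase (i+1) := by
        intro v hv
        rw [Finset.mem_filter] at hv
        rw [Finset.mem_erase]
        exact ⟨fun h => hv.2 (h ▸ hzero1), Finset.mem_univ v⟩
      have h2 : 1 ≤ ∑ v ∈ Finset.univ.erase (i+1), g v :=
        h1.trans (Finset.sum_le_sum_of_subset_of_nonneg hsub (fun v _ _ => (hg01 v).1))
      have h3 : g (i+1) + ∑ v ∈ Finset.univ.erase (i+1), g v = ∑ v, g v :=
        Finset.add_sum_erase _ _ (Finset.mem_univ _)
      linarith
    have hsum := Finset.sum_le_sum (fun i (_ : i ∈ Finset.univ) => key i)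
    rw [Finset.sum_add_distrib, Finset.sum_const, Finset.sum_const,
      Finset.card_univ, Fintype.card_fin, nsmul_eq_mul, nsmul_eq_mul] at hsum
    have hre : ∑ i : Fin n, g (i + 1) = ∑ v, g v :=
      Fintype.sum_equiv (Equiv.addRight (1 : Fin n)) _ _ (fun i => rfl)
    rw [hre] at hsum
    rw [div_le_iff₀ (by linarith)]
    nlinarith [hsum]
  show sInf S = _
  exact le_antisymm (csInf_le ⟨_, hlb⟩ hmem) (le_csInf ⟨_, hmem⟩ hlb)
end

section
/- For the cycle C_n with n ≥ 4 even, edim_f(C_n) = n/(n−2). -/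
open Finset
open scoped Classical

variable {V : Type*}

/-! ### Auxiliary lemmas -/

open SimpleGraph
open Fin.CommRing

private lemma mod_two_cases (x n : ℕ) (h : x < 2*n) : x % n = x ∨ x % n + n = x := by
  rcases Nat.lt_or_ge x n with h' | h'
  · left; exact Nat.mod_eq_of_lt h'
  · right
    have : x % n = x - n := by
      rw [Nat.mod_eq_sub_mod h', Nat.mod_eq_of_lt (by omega)]
    omega

private lemma step_nat (n A B C D : ℕ) (hn : 4 ≤ n) (hC : C < n) (hD : D < n)
    (hCD : (C = 0 ∧ D = 0) ∨ C + D = n)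
    (h : (A = (C+1) % n ∧ B = (n-1+D) % n) ∨ (A = (n-1+C) % n ∧ B = (D+1) % n)) :
    min A B ≤ min C D + 1 := by
  have m1 := mod_two_cases (C+1) n (by omega)
  have m2 := mod_two_cases (D+1) n (by omega)
  have m3 := mod_two_cases (n-1+C) n (by omega)
  have m4 := mod_two_cases (n-1+D) n (by omega)
  have l1 : (C+1) % n < n := Nat.mod_lt _ (by omega)
  have l2 : (D+1) % n < n := Nat.mod_lt _ (by omega)
  have l3 : (n-1+C) % n < n := Nat.mod_lt _ (by omega)
  have l4 : (n-1+D) % n < n := Nat.mod_lt _ (by omega)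
  generalize (C+1) % n = P1 at h m1 l1
  generalize (D+1) % n = P2 at h m2 l2
  generalize (n-1+C) % n = P3 at h m3 l3
  generalize (n-1+D) % n = P4 at h m4 l4
  omega

private lemma edist_nat (n a b c d : ℕ) (hn : 4 ≤ n) (ha : a < n)
    (hab : (a = 0 ∧ b = 0) ∨ a + b = n)
    (hc : c = (n-1+a) % n) (hd : d = (b+1) % n) :
    min (min a b) (min c d) = min (a-1) (n-a) := by
  have m1 := mod_two_cases (n-1+a) n (by omega)
  have m2 := mod_two_cases (b+1) n (by omega)
  have l1 : (n-1+a) % n < n := Nat.mod_lt _ (by omega)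
  have l2 : (b+1) % n < n := Nat.mod_lt _ (by omega)
  generalize (n-1+a) % n = P1 at hc m1 l1
  generalize (b+1) % n = P2 at hd m2 l2
  omega

private lemma key1 (n k a b : ℕ) (hn : 4 ≤ n) (he : n % 2 = 0)
    (hk1 : 1 ≤ k) (hk2 : k < n) (ha : a < n) (hb : b < n)
    (hab : b = a + k ∨ b + n = a + k)
    (h : min (a - 1) (n - a) = min (b - 1) (n - b)) :
    2*a + k = n + 1 ∨ 2*a + k = 2*n + 1 ∨ (k = 1 ∧ a = 0) := by
  omega

private lemma key0 (n k a₁ a₂ a₃ : ℕ) (hn : 4 ≤ n)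
    (ha1 : a₁ < n) (ha2 : a₂ < n) (ha3 : a₃ < n)
    (hne12 : a₁ ≠ a₂) (hne13 : a₁ ≠ a₃) (hne23 : a₂ ≠ a₃)
    (c1 : 2*a₁ + k = n + 1 ∨ 2*a₁ + k = 2*n + 1 ∨ (k = 1 ∧ a₁ = 0))
    (c2 : 2*a₂ + k = n + 1 ∨ 2*a₂ + k = 2*n + 1 ∨ (k = 1 ∧ a₂ = 0))
    (c3 : 2*a₃ + k = n + 1 ∨ 2*a₃ + k = 2*n + 1 ∨ (k = 1 ∧ a₃ = 0)) : False := by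
  omega

section
variable {n : ℕ} [NeZero n]

private lemma val_one' (hn : 2 ≤ n) : (1 : Fin n).val = 1 := by
  rw [Fin.val_one']; exact Nat.mod_eq_of_lt (by omega)

private lemma adj_succ (hn : 2 ≤ n) (x : Fin n) : (cycleGraph n).Adj x (x + 1) := by
  rw [cycleGraph_adj']
  right
  rw [show x + 1 - x = 1 by ring, val_one' hn]

private lemma cycle_conn (hn : 1 ≤ n) : (cycleGraph n).Connected := by
  obtain ⟨m, rfl⟩ : ∃ m, n = m + 1 := ⟨n - 1, by omega⟩
  exact cycleGraph_connected

private lemma neg_pair_val (u v : Fin n) :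
    ((u - v).val = 0 ∧ (v - u).val = 0) ∨ ((u - v).val + (v - u).val = n) := by
  have h : (u - v) + (v - u) = 0 := by ring
  have h2 : ((u - v).val + (v - u).val) % n = 0 := by rw [← Fin.val_add, h, Fin.val_zero]
  have := (u - v).isLt
  have := (v - u).isLt
  have := mod_two_cases ((u - v).val + (v - u).val) n (by omega)
  omega

private lemma walk_lower (hn : 4 ≤ n) (u v : Fin n) (p : (cycleGraph n).Walk u v) :
    min (v - u).val (u - v).val ≤ p.length := by
  induction p with
  | nil => simp
  | @cons u w v h q ih =>
    rw [Walk.length_cons]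
    have hCD : ((v - w).val = 0 ∧ (w - v).val = 0) ∨ ((v - w).val + (w - v).val = n) :=
      neg_pair_val v w
    have key : min (v - u).val (u - v).val ≤ min (v - w).val (w - v).val + 1 := by
      refine step_nat n _ _ _ _ hn (Fin.isLt _) (Fin.isLt _) hCD ?_
      rcases cycleGraph_adj'.mp h with h1 | h1
      · have hw : u - w = 1 := Fin.ext (by rw [h1, val_one' (by omega)])
        have hA : v - u = (v - w) - 1 := by rw [← hw]; ring
        have hB : u - v = (w - v) + 1 := by rw [← hw]; ring
        right
        constructor
        · rw [hA, Fin.sub_def]; show (n - (1 : Fin n).val + _) % n = _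
          rw [val_one' (by omega)]
        · rw [hB, Fin.val_add, val_one' (by omega)]
      · have hw : w - u = 1 := Fin.ext (by rw [h1, val_one' (by omega)])
        have hA : v - u = (v - w) + 1 := by rw [← hw]; ring
        have hB : u - v = (w - v) - 1 := by rw [← hw]; ring
        left
        constructor
        · rw [hA, Fin.val_add, val_one' (by omega)]
        · rw [hB, Fin.sub_def]; show (n - (1 : Fin n).val + _) % n = _
          rw [val_one' (by omega)]
    omega

private lemma dist_upper (hn : 4 ≤ n) (u v : Fin n) : (cycleGraph n).dist u v ≤ (v - u).val := by
  have key : ∀ k : ℕ, (cycleGraph n).dist u (u + (k : Fin n)) ≤ k := by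
    intro k
    induction k with
    | zero => simp
    | succ k ih =>
      have tri := (cycle_conn (by omega)).dist_triangle
        (u := u) (v := u + (k : Fin n)) (w := u + ((k+1 : ℕ) : Fin n))
      have hadj : (cycleGraph n).Adj (u + (k : Fin n)) (u + ((k+1 : ℕ) : Fin n)) := by
        have : (((k+1 : ℕ)) : Fin n) = (k : Fin n) + 1 := by push_cast; ring
        rw [this, ← add_assoc]
        exact adj_succ (by omega) _
      have : (cycleGraph n).dist (u + (k : Fin n)) (u + ((k+1:ℕ) : Fin n)) = 1 :=
        (dist_eq_one_iff_adj).mpr hadj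
      omega
  have h2 := key (v - u).val
  rwa [Fin.cast_val_eq_self, add_sub_cancel] at h2

private lemma cycle_dist (hn : 4 ≤ n) (u v : Fin n) :
    (cycleGraph n).dist u v = min (v - u).val (u - v).val := by
  refine le_antisymm (le_min (dist_upper hn u v) ?_) ?_
  · rw [SimpleGraph.dist_comm]; exact dist_upper hn v u
  · obtain ⟨p, hp⟩ := ((cycle_conn (by omega : 1 ≤ n)) u v).exists_walk_length_eq_dist
    rw [← hp]
    exact walk_lower hn u v p

private lemma edgeDist_formula (hn : 4 ≤ n) (i z : Fin n) :
    (cycleGraph n).edgeDist s(i, i+1) z = min ((z-i).val - 1) (n - (z-i).val) := by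
  have h0 : (cycleGraph n).edgeDist s(i, i+1) z
      = min ((cycleGraph n).dist i z) ((cycleGraph n).dist (i+1) z) := rfl
  rw [h0, cycle_dist hn, cycle_dist hn]
  refine edist_nat n _ _ _ _ hn (Fin.isLt _) (neg_pair_val z i) ?_ ?_
  · have : z - (i + 1) = (z - i) - 1 := by ring
    rw [this, Fin.sub_def]
    show (n - (1 : Fin n).val + _) % n = _
    rw [val_one' (by omega)]
  · have : (i + 1) - z = (i - z) + 1 := by ring
    rw [this, Fin.val_add, val_one' (by omega)]

private lemma edge_form (hn : 4 ≤ n) {e : Sym2 (Fin n)} (he : e ∈ (cycleGraph n).edgeSet) :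
    ∃ i : Fin n, e = s(i, i+1) := by
  induction e with
  | _ u v =>
    rw [SimpleGraph.mem_edgeSet, cycleGraph_adj'] at he
    rcases he with h | h
    · have : u - v = 1 := Fin.ext (by rw [h, val_one' (by omega)])
      have hu : u = v + 1 := by rw [← this]; ring
      exact ⟨v, by rw [hu, Sym2.eq_swap]⟩
    · have : v - u = 1 := Fin.ext (by rw [h, val_one' (by omega)])
      have hv : v = u + 1 := by rw [← this]; ring
      exact ⟨u, by rw [hv]⟩

private lemma count_eq_le_two (hn : 4 ≤ n) (he : n % 2 = 0) {i j : Fin n} (hij : i ≠ j) :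
    (univ.filter fun z : Fin n =>
      (cycleGraph n).edgeDist s(i,i+1) z = (cycleGraph n).edgeDist s(j,j+1) z).card ≤ 2 := by
  by_contra hcon
  push_neg at hcon
  rw [show (2 : ℕ) < _ ↔ _ from Finset.two_lt_card_iff] at hcon
  obtain ⟨z₁, z₂, z₃, hz₁, hz₂, hz₃, h12, h13, h23⟩ := hcon
  rw [mem_filter, edgeDist_formula hn, edgeDist_formula hn] at hz₁ hz₂ hz₃
  set k := (i - j).val with hk
  have hk1 : 1 ≤ k := by
    refine Nat.pos_of_ne_zero fun h => hij ?_
    have h1 : i - j = 0 := Fin.ext (by rw [Fin.val_zero]; exact h)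
    rwa [sub_eq_zero] at h1
  have hbval : ∀ z : Fin n, (z - j).val = ((z - i).val + k) % n := by
    intro z
    have : z - j = (z - i) + (i - j) := by ring
    rw [this, Fin.val_add]
  have hb : ∀ z : Fin n, (z - j).val = (z - i).val + k ∨ (z - j).val + n = (z - i).val + k := by
    intro z
    have hlt : (z - i).val + k < 2 * n := by
      have := (z - i).isLt
      have : k < n := (i - j).isLt
      omega
    have h2 := mod_two_cases ((z - i).val + k) n hlt
    rw [← hbval z] at h2
    exact h2
  have hane : ∀ z w : Fin n, z ≠ w → (z - i).val ≠ (w - i).val := by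
    intro z w hzw hval
    apply hzw
    have h1 : z - i = w - i := Fin.ext hval
    have h2 := congrArg (· + i) h1
    simpa [sub_add_cancel] using h2
  have hklt : k < n := (i - j).isLt
  refine key0 n k (z₁ - i).val (z₂ - i).val (z₃ - i).val hn
    (Fin.isLt _) (Fin.isLt _) (Fin.isLt _)
    (hane _ _ h12) (hane _ _ h13) (hane _ _ h23) ?_ ?_ ?_
  · exact key1 n k _ _ hn he hk1 hklt (Fin.isLt _) (Fin.isLt _) (hb z₁) hz₁.2
  · exact key1 n k _ _ hn he hk1 hklt (Fin.isLt _) (Fin.isLt _) (hb z₂) hz₂.2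
  · exact key1 n k _ _ hn he hk1 hklt (Fin.isLt _) (Fin.isLt _) (hb z₃) hz₃.2

private def half (hn : 4 ≤ n) : Fin n := ⟨n/2, by omega⟩

private lemma adj_pair_eq (hn : 4 ≤ n) (he : n % 2 = 0) (i z : Fin n)
    (hz : z = i + 1 ∨ z = i + 1 + half hn) :
    (cycleGraph n).edgeDist s(i, i+1) z = (cycleGraph n).edgeDist s(i+1, i+1+1) z := by
  rw [edgeDist_formula hn, edgeDist_formula hn]
  rcases hz with rfl | rfl
  · have h1 : (i + 1 - i) = 1 := by ring
    have h2 : (i + 1 - (i+1)) = 0 := by ring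
    rw [h1, h2, val_one' (by omega), Fin.val_zero]
    omega
  · have h1 : (i + 1 + half hn - i) = 1 + half hn := by ring
    have h2 : (i + 1 + half hn - (i+1)) = half hn := by ring
    rw [h1, h2]
    have h3 : ((1 : Fin n) + half hn).val = 1 + n/2 := by
      rw [Fin.val_add, val_one' (by omega)]
      show (1 + n/2) % n = 1 + n/2
      exact Nat.mod_eq_of_lt (by omega)
    rw [h3]
    show min (1 + n/2 - 1) (n - (1 + n/2)) = min (n/2 - 1) (n - n/2)
    omega

private lemma mySuccNe (hn : 4 ≤ n) (x : Fin n) : x + 1 ≠ x := by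
  intro h
  have h2 : (x + 1).val = x.val := by rw [h]
  rw [Fin.val_add, val_one' (by omega)] at h2
  have := mod_two_cases (x.val + 1) n (by have := x.isLt; omega)
  have := x.isLt
  omega

private lemma myTwoNe (hn : 4 ≤ n) (x : Fin n) : x + 1 + 1 ≠ x := by
  intro h
  have h2 : (x + 1 + 1).val = x.val := by rw [h]
  rw [Fin.val_add, Fin.val_add, val_one' (by omega)] at h2
  have hx := x.isLt
  have m1 := mod_two_cases (x.val + 1) n (by omega)
  have l1 : (x.val + 1) % n < n := Nat.mod_lt _ (by omega)
  generalize hg : (x.val + 1) % n = P1 at h2 m1 l1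
  have m2 := mod_two_cases (P1 + 1) n (by omega)
  generalize (P1 + 1) % n = P2 at h2 m2
  omega

private lemma edge_ne_succ (hn : 4 ≤ n) (i : Fin n) :
    (s(i, i+1) : Sym2 (Fin n)) ≠ s(i+1, i+1+1) := by
  intro h
  rw [Sym2.eq_iff] at h
  rcases h with ⟨h1, _⟩ | ⟨h1, _⟩
  · exact mySuccNe hn i h1.symm
  · exact myTwoNe hn i h1.symm
end

/-- For the even cycle `C_n`, `n ≥ 4`, `edim_f(C_n) = n / (n - 2)`. -/
theorem stmt_12 (n : ℕ) (hn : 4 ≤ n) (heven : Even n) :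
    (SimpleGraph.cycleGraph n).edimf = (n : ℝ) / ((n : ℝ) - 2) := by
  haveI : NeZero n := ⟨by omega⟩
  have he2 : n % 2 = 0 := Nat.even_iff.mp heven
  have hn4R : (4:ℝ) ≤ (n:ℝ) := by exact_mod_cast hn
  have hn2R : (0:ℝ) < (n:ℝ) - 2 := by linarith
  rw [SimpleGraph.edimf]
  set S := {x : ℝ | ∃ g : Fin n → ℝ,
    (cycleGraph n).IsEdgeResolvingFunction g ∧ ∑ v, g v = x} with hS
  have hmem : (n:ℝ)/((n:ℝ)-2) ∈ S := by
    refine ⟨fun _ => 1/((n:ℝ)-2), ⟨?_, ?_⟩, ?_⟩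
    · intro v
      refine ⟨by positivity, ?_⟩
      rw [div_le_one hn2R]; linarith
    · intro e₁ he₁ e₂ he₂ hne
      obtain ⟨i, rfl⟩ := edge_form hn he₁
      obtain ⟨j, rfl⟩ := edge_form hn he₂
      have hij : i ≠ j := fun h => hne (by rw [h])
      have hcard : n - 2 ≤ (univ.filter fun z => (cycleGraph n).edgeDist s(i,i+1) z ≠
          (cycleGraph n).edgeDist s(j,j+1) z).card := by
        have heqf : (univ.filter fun z => ¬ ((cycleGraph n).edgeDist s(i,i+1) z =
            (cycleGraph n).edgeDist s(j,j+1) z)) = univ \ (univ.filter fun z =>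
            (cycleGraph n).edgeDist s(i,i+1) z = (cycleGraph n).edgeDist s(j,j+1) z) :=
          Finset.filter_not _ _
        have h2 := count_eq_le_two hn he2 hij
        have h3 : (univ : Finset (Fin n)).card = n := by simp
        have h4 : (univ.filter fun z => ¬ ((cycleGraph n).edgeDist s(i,i+1) z =
            (cycleGraph n).edgeDist s(j,j+1) z)).card = n - (univ.filter fun z =>
            (cycleGraph n).edgeDist s(i,i+1) z = (cycleGraph n).edgeDist s(j,j+1) z).card := by
          rw [heqf, Finset.card_sdiff_of_subset (Finset.filter_subset _ _), h3]
        simp only [ne_eq]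
        omega
      rw [Finset.sum_const, nsmul_eq_mul, mul_one_div, le_div_iff₀ hn2R, one_mul]
      calc (n:ℝ) - 2 ≤ ((n - 2 : ℕ) : ℝ) := by
            rw [Nat.cast_sub (by omega)]; push_cast; linarith
        _ ≤ _ := Nat.cast_le.mpr hcard
    · rw [Finset.sum_const, card_univ, Fintype.card_fin, nsmul_eq_mul, mul_one_div]
  have hlb : ∀ x ∈ S, (n:ℝ)/((n:ℝ)-2) ≤ x := by
    rintro x ⟨g, ⟨hg01, hgres⟩, rfl⟩
    have key : ∀ i : Fin n, 1 + (g (i+1) + g (i+1+half hn)) ≤ ∑ v, g v := by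
      intro i
      have hmem1 : s(i,i+1) ∈ (cycleGraph n).edgeSet := adj_succ (by omega) i
      have hmem2 : s(i+1,i+1+1) ∈ (cycleGraph n).edgeSet := adj_succ (by omega) (i+1)
      have h1 := hgres _ hmem1 _ hmem2 (edge_ne_succ hn i)
      have hsub : (univ.filter fun z => (cycleGraph n).edgeDist s(i,i+1) z ≠
          (cycleGraph n).edgeDist s(i+1,i+1+1) z) ⊆ univ \ {i+1, i+1+half hn} := by
        intro z hz
        rw [mem_filter] at hz
        rw [mem_sdiff]
        refine ⟨mem_univ _, fun hmemz => ?_⟩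
        rw [mem_insert, mem_singleton] at hmemz
        exact hz.2 (adj_pair_eq hn he2 i z hmemz)
      have h2 : ∑ z ∈ (univ.filter fun z => (cycleGraph n).edgeDist s(i,i+1) z ≠
            (cycleGraph n).edgeDist s(i+1,i+1+1) z), g z ≤ ∑ z ∈ univ \ {i+1, i+1+half hn}, g z :=
        Finset.sum_le_sum_of_subset_of_nonneg hsub (fun z _ _ => (hg01 z).1)
      have hpq : (i+1 : Fin n) ≠ i+1+half hn := by
        intro h
        have h' : half hn = 0 := left_eq_add.mp h
        have hv : (half hn).val = 0 := by rw [h']; rfl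
        have hv2 : n / 2 = 0 := hv
        omega
      have h3 : ∑ z ∈ univ \ {i+1, i+1+half hn}, g z
          = (∑ v, g v) - (g (i+1) + g (i+1+half hn)) := by
        rw [Finset.sum_sdiff_eq_sub (subset_univ _), Finset.sum_pair hpq]
      linarith
    have hsum := Finset.sum_le_sum (fun i (_ : i ∈ (univ : Finset (Fin n))) => key i)
    have hre1 : ∑ i : Fin n, g (i + 1) = ∑ v, g v :=
      Fintype.sum_equiv (Equiv.addRight (1 : Fin n)) _ _ (fun i => rfl)
    have hre2 : ∑ i : Fin n, g (i + 1 + half hn) = ∑ v, g v := by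
      have h := Fintype.sum_equiv (Equiv.addRight ((1 : Fin n) + half hn))
        (fun i => g (i + (1 + half hn))) g (fun i => rfl)
      calc ∑ i : Fin n, g (i + 1 + half hn) = ∑ i : Fin n, g (i + (1 + half hn)) := by
            refine Finset.sum_congr rfl fun i _ => ?_
            rw [add_assoc]
        _ = ∑ v, g v := h
    have hR : ∑ _i : Fin n, ∑ v, g v = (n : ℝ) * ∑ v, g v := by
      rw [Finset.sum_const, card_univ, Fintype.card_fin, nsmul_eq_mul]
    rw [Finset.sum_add_distrib, Finset.sum_add_distrib, hre1, hre2, hR, Finset.sum_const,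
      card_univ, Fintype.card_fin] at hsum
    simp only [nsmul_eq_mul, mul_one] at hsum
    rw [div_le_iff₀ hn2R]
    have hring : (∑ v, g v) * ((n:ℝ) - 2) = (n:ℝ) * (∑ v, g v) - 2 * (∑ v, g v) := by ring
    linarith
  have hbdd : BddBelow S := ⟨_, fun x hx => hlb x hx⟩
  exact le_antisymm (csInf_le hbdd hmem) (le_csInf ⟨_, hmem⟩ hlb)
end

section
/- For the Petersen graph P, edim_f(P) = 5/2. -/
open Finset
open scoped Classical

variable {V : Type*}

/-- The Petersen graph: outer 5-cycle `inl i ~ inl (i+1)`, inner pentagram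
`inr i ~ inr (i+2)`, spokes `inl i ~ inr i`. -/
def petersenGraph : SimpleGraph (Fin 5 ⊕ Fin 5) :=
  SimpleGraph.fromRel (fun a b =>
    match a, b with
    | Sum.inl i, Sum.inl j => j = i + 1
    | Sum.inr i, Sum.inr j => j = i + 2
    | Sum.inl i, Sum.inr j => i = j
    | _, _ => False)

abbrev PV := Fin 5 ⊕ Fin 5
def prel : PV → PV → Bool
  | Sum.inl i, Sum.inl j => j = i + 1
  | Sum.inr i, Sum.inr j => j = i + 2
  | Sum.inl i, Sum.inr j => i = j
  | _, _ => false
def padj (a b : PV) : Bool := decide (a ≠ b) && (prel a b || prel b a)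
def pdist (a b : PV) : ℕ := if a = b then 0 else if padj a b then 1 else 2

lemma padj_iff (a b : PV) : petersenGraph.Adj a b ↔ padj a b = true := by
  rw [petersenGraph, SimpleGraph.fromRel_adj]
  cases a <;> cases b <;> simp [padj, prel, decide_eq_true_eq] <;> tauto

lemma common_nbr : ∀ a b : PV, padj a b = false → a ≠ b →
    ∃ c, padj a c = true ∧ padj c b = true := by decide

lemma pdist_eq (a b : PV) : petersenGraph.dist a b = pdist a b := by
  unfold pdist
  by_cases h : a = b
  · subst h; simp [SimpleGraph.dist_self]
  · rw [if_neg h]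
    by_cases h2 : padj a b = true
    · rw [if_pos h2]; exact SimpleGraph.dist_eq_one_iff_adj.mpr ((padj_iff a b).mpr h2)
    · rw [if_neg h2]
      obtain ⟨c, hc1, hc2⟩ := common_nbr a b (by simpa using h2) h
      have ha1 : petersenGraph.Adj a c := (padj_iff _ _).mpr hc1
      have ha2 : petersenGraph.Adj c b := (padj_iff _ _).mpr hc2
      have hle : petersenGraph.dist a b ≤ 2 :=
        SimpleGraph.dist_le (SimpleGraph.Walk.cons ha1 (SimpleGraph.Walk.cons ha2 SimpleGraph.Walk.nil))
      have hpos : 0 < petersenGraph.dist a b :=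
        SimpleGraph.Reachable.pos_dist_of_ne ⟨SimpleGraph.Walk.cons ha1 (SimpleGraph.Walk.cons ha2 SimpleGraph.Walk.nil)⟩ h
      have hne1 : petersenGraph.dist a b ≠ 1 := fun hh =>
        h2 ((padj_iff a b).mp (SimpleGraph.dist_eq_one_iff_adj.mp hh))
      omega

lemma edgeDist_mk (a b v : PV) :
    petersenGraph.edgeDist s(a, b) v = min (pdist a v) (pdist b v) := by
  simp [SimpleGraph.edgeDist, pdist_eq]

lemma mem_edge (a b : PV) : s(a, b) ∈ petersenGraph.edgeSet ↔ padj a b = true := by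
  rw [SimpleGraph.mem_edgeSet, padj_iff]

def ok4 (a b c d : PV) : Bool :=
  !(padj a b) || !(padj c d) || decide ((a = c ∧ b = d) ∨ (a = d ∧ b = c)) ||
    decide (4 ≤ (Finset.univ.filter fun z =>
      min (pdist a z) (pdist b z) ≠ min (pdist c z) (pdist d z)).card)

set_option maxHeartbeats 4000000 in
theorem ok4_true : ∀ a b c d : PV, ok4 a b c d = true := by decide

lemma card4 {a b c d : PV} (hab : padj a b = true) (hcd : padj c d = true)
    (hne : ¬((a = c ∧ b = d) ∨ (a = d ∧ b = c))) :
    4 ≤ (Finset.univ.filter fun z =>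
      min (pdist a z) (pdist b z) ≠ min (pdist c z) (pdist d z)).card := by
  have h := ok4_true a b c d
  simp only [ok4, hab, hcd, Bool.not_true, Bool.false_or, decide_eq_true_eq,
    Bool.or_eq_true] at h
  tauto

lemma keyR0 : (univ.filter fun z => min (pdist (.inl 0) z) (pdist (.inl 1) z) ≠ min (pdist (.inr 2) z) (pdist (.inr 4) z)) = ({.inl 0, .inl 1, .inr 2, .inr 4} : Finset PV) := by decide
lemma keyR1 : (univ.filter fun z => min (pdist (.inl 1) z) (pdist (.inl 2) z) ≠ min (pdist (.inr 3) z) (pdist (.inr 0) z)) = ({.inl 1, .inl 2, .inr 3, .inr 0} : Finset PV) := by decide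
lemma keyR2 : (univ.filter fun z => min (pdist (.inl 2) z) (pdist (.inl 3) z) ≠ min (pdist (.inr 4) z) (pdist (.inr 1) z)) = ({.inl 2, .inl 3, .inr 4, .inr 1} : Finset PV) := by decide
lemma keyR3 : (univ.filter fun z => min (pdist (.inl 3) z) (pdist (.inl 4) z) ≠ min (pdist (.inr 0) z) (pdist (.inr 2) z)) = ({.inl 3, .inl 4, .inr 0, .inr 2} : Finset PV) := by decide
lemma keyR4 : (univ.filter fun z => min (pdist (.inl 4) z) (pdist (.inl 0) z) ≠ min (pdist (.inr 1) z) (pdist (.inr 3) z)) = ({.inl 4, .inl 0, .inr 1, .inr 3} : Finset PV) := by decide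


lemma mem52 : (5/2 : ℝ) ∈ {x | ∃ g : PV → ℝ,
    petersenGraph.IsEdgeResolvingFunction g ∧ ∑ v, g v = x} := by
  refine ⟨fun _ => 1/4, ⟨fun v => by norm_num, ?_⟩, ?_⟩
  · intro e₁ he₁ e₂ he₂ hne
    induction e₁ using Sym2.ind with | _ a b =>
    induction e₂ using Sym2.ind with | _ c d =>
    rw [mem_edge] at he₁ he₂
    have hne' : ¬((a = c ∧ b = d) ∨ (a = d ∧ b = c)) := by
      rw [← Sym2.eq_iff]; exact hne
    have h4 := card4 he₁ he₂ hne'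
    have hfe : (univ.filter fun z =>
        petersenGraph.edgeDist s(a, b) z ≠ petersenGraph.edgeDist s(c, d) z)
        = (univ.filter fun z => min (pdist a z) (pdist b z) ≠ min (pdist c z) (pdist d z)) := by
      ext z; simp [edgeDist_mk]
    rw [hfe, Finset.sum_const, nsmul_eq_mul]
    have : (4 : ℝ) ≤ ((univ.filter fun z => min (pdist a z) (pdist b z) ≠ min (pdist c z) (pdist d z)).card : ℝ) := by
      exact_mod_cast h4
    linarith
  · rw [Finset.sum_const]
    simp only [Finset.card_univ, Fintype.card_sum, Fintype.card_fin, nsmul_eq_mul]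
    norm_num

lemma quad (g : PV → ℝ)
    (hres : ∀ e₁ ∈ petersenGraph.edgeSet, ∀ e₂ ∈ petersenGraph.edgeSet, e₁ ≠ e₂ →
      1 ≤ ∑ z ∈ Finset.univ.filter
        (fun z => petersenGraph.edgeDist e₁ z ≠ petersenGraph.edgeDist e₂ z), g z)
    (a b c d : Fin 5)
    (hab : padj (.inl a) (.inl b) = true) (hcd : padj (.inr c) (.inr d) = true)
    (hf : (univ.filter fun z => min (pdist (.inl a) z) (pdist (.inl b) z)
        ≠ min (pdist (.inr c) z) (pdist (.inr d) z))
      = ({.inl a, .inl b, .inr c, .inr d} : Finset PV))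
    (h1 : a ≠ b) (h2 : c ≠ d) :
    1 ≤ g (.inl a) + g (.inl b) + g (.inr c) + g (.inr d) := by
  have he1 : s((Sum.inl a : PV), .inl b) ∈ petersenGraph.edgeSet := (mem_edge _ _).mpr hab
  have he2 : s((Sum.inr c : PV), .inr d) ∈ petersenGraph.edgeSet := (mem_edge _ _).mpr hcd
  have hne : s((Sum.inl a : PV), .inl b) ≠ s((Sum.inr c : PV), .inr d) := by
    rw [Ne, Sym2.eq_iff]
    rintro (⟨h, -⟩ | ⟨h, -⟩) <;> exact absurd h (by simp)
  have h := hres _ he1 _ he2 hne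
  have efil : (univ.filter fun z =>
      petersenGraph.edgeDist s((Sum.inl a : PV), .inl b) z
        ≠ petersenGraph.edgeDist s((Sum.inr c : PV), .inr d) z)
      = ({.inl a, .inl b, .inr c, .inr d} : Finset PV) := by
    rw [← hf]; ext z; simp [edgeDist_mk]
  rw [efil] at h
  rw [Finset.sum_insert (by simp [h1]), Finset.sum_insert (by simp),
    Finset.sum_insert (by simp [h2]), Finset.sum_singleton] at h
  linarith

lemma lower_bound : ∀ x ∈ {x | ∃ g : PV → ℝ,
    petersenGraph.IsEdgeResolvingFunction g ∧ ∑ v, g v = x}, (5/2 : ℝ) ≤ x := by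
  rintro x ⟨g, ⟨-, hres⟩, rfl⟩
  have k0 := quad g hres 0 1 2 4 (by decide) (by decide) keyR0 (by decide) (by decide)
  have k1 := quad g hres 1 2 3 0 (by decide) (by decide) keyR1 (by decide) (by decide)
  have k2 := quad g hres 2 3 4 1 (by decide) (by decide) keyR2 (by decide) (by decide)
  have k3 := quad g hres 3 4 0 2 (by decide) (by decide) keyR3 (by decide) (by decide)
  have k4 := quad g hres 4 0 1 3 (by decide) (by decide) keyR4 (by decide) (by decide)
  have hsum : ∑ v : PV, g v =
      (g (.inl 0) + g (.inl 1) + g (.inl 2) + g (.inl 3) + g (.inl 4)) +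
      (g (.inr 0) + g (.inr 1) + g (.inr 2) + g (.inr 3) + g (.inr 4)) := by
    rw [Fintype.sum_sum_type]
    simp [Fin.sum_univ_five]
  rw [hsum]
  linarith


/-- For the Petersen graph, `edim_f = 5/2`. -/
theorem stmt_13 : petersenGraph.edimf = 5 / 2 := by
  unfold SimpleGraph.edimf
  exact le_antisymm (csInf_le ⟨5/2, lower_bound⟩ mem52) (le_csInf ⟨_, mem52⟩ lower_bound)
end

section
/- For the wheel graph W_n = K_1 + C_{n−1} of order n ≥ 6, edim_f(W_n) = (n−1)/2. -/
open Finset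
open scoped Classical

variable {V : Type*}

/-- The wheel graph `W_{m+1} = K₁ + C_m`: hub `none` adjacent to every rim vertex,
rim vertices forming the cycle `some i ~ some (i+1)`. -/
def wheelGraph (m : ℕ) : SimpleGraph (Option (Fin m)) :=
  SimpleGraph.fromRel (fun a b =>
    match a, b with
    | none, some _ => True
    | some i, some j => (j : ℕ) = ((i : ℕ) + 1) % m
    | _, _ => False)

set_option linter.unusedSectionVars false

section Aux
open Fin.NatCast
variable {m : ℕ} [NeZero m]

lemma adj_none_some (i : Fin m) : (wheelGraph m).Adj none (some i) := by
  simp [wheelGraph, SimpleGraph.fromRel_adj]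

lemma adj_some_iff (hm : 2 ≤ m) (i j : Fin m) :
    (wheelGraph m).Adj (some i) (some j) ↔ i ≠ j ∧ (j = i + 1 ∨ i = j + 1) := by
  have h1 : ((1 : Fin m) : ℕ) = 1 := by
    simp [Fin.val_one, Nat.mod_eq_of_lt (by omega : 1 < m)]
  simp only [wheelGraph, SimpleGraph.fromRel_adj, ne_eq, Option.some.injEq]
  constructor
  · rintro ⟨hne, h | h⟩
    · exact ⟨fun h' => hne (by rw [h']), Or.inl (by rw [Fin.ext_iff, Fin.val_add, h1]; exact h)⟩
    · exact ⟨fun h' => hne (by rw [h']), Or.inr (by rw [Fin.ext_iff, Fin.val_add, h1]; exact h)⟩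
  · rintro ⟨hne, h | h⟩
    · exact ⟨fun h' => hne h', Or.inl (by rw [h, Fin.val_add, h1])⟩
    · exact ⟨fun h' => hne h', Or.inr (by rw [h, Fin.val_add, h1])⟩

lemma wheel_preconnected : (wheelGraph m).Preconnected := by
  intro a b
  have key : ∀ v : Option (Fin m), (wheelGraph m).Reachable none v := by
    rintro (_ | i)
    · rfl
    · exact (adj_none_some i).reachable
  exact (key a).symm.trans (key b)

lemma dist_eq_two (a b : Option (Fin m)) (hne : a ≠ b) (hadj : ¬ (wheelGraph m).Adj a b) :
    (wheelGraph m).dist a b = 2 := by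
  have h2 : (wheelGraph m).dist a b ≤ 2 := by
    obtain (_ | i) := a
    · obtain (_ | j) := b
      · simp at hne
      · exact absurd (adj_none_some j) hadj
    · obtain (_ | j) := b
      · exact absurd ((adj_none_some i).symm) hadj
      · exact SimpleGraph.dist_le (SimpleGraph.Walk.cons (adj_none_some i).symm
            (SimpleGraph.Walk.cons (adj_none_some j) SimpleGraph.Walk.nil))
  have h0 : (wheelGraph m).dist a b ≠ 0 := by
    rw [ne_eq, SimpleGraph.dist_eq_zero_iff_eq_or_not_reachable]
    push_neg
    exact ⟨hne, wheel_preconnected a b⟩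
  have h1 : (wheelGraph m).dist a b ≠ 1 := fun h =>
    hadj (SimpleGraph.dist_eq_one_iff_adj.mp h)
  omega

lemma dist_adj {a b : Option (Fin m)} (h : (wheelGraph m).Adj a b) :
    (wheelGraph m).dist a b = 1 := SimpleGraph.dist_eq_one_iff_adj.mpr h

lemma wdist_ne_zero {a b : Option (Fin m)} (h : a ≠ b) : (wheelGraph m).dist a b ≠ 0 := by
  rw [ne_eq, SimpleGraph.dist_eq_zero_iff_eq_or_not_reachable]
  push_neg
  exact ⟨h, wheel_preconnected a b⟩

lemma edgeDist_mk_s14 (a b v : Option (Fin m)) :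
    (wheelGraph m).edgeDist s(a, b) v
      = min ((wheelGraph m).dist a v) ((wheelGraph m).dist b v) := rfl

lemma fin_cast_ne {k l : ℕ} (hk : k < m) (hl : l < m) (hkl : k ≠ l) :
    (k : Fin m) ≠ (l : Fin m) := by
  intro h
  apply hkl
  have := congrArg Fin.val h
  rwa [Fin.val_cast_of_lt hk, Fin.val_cast_of_lt hl] at this

lemma fin_shift_ne (i : Fin m) {k l : ℕ} (hk : k < m) (hl : l < m) (hkl : k ≠ l) :
    i + (k : Fin m) ≠ i + (l : Fin m) := fun h => fin_cast_ne hk hl hkl (add_left_cancel h)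

lemma edgeDist_spoke_none (i : Fin m) :
    (wheelGraph m).edgeDist s(none, some i) none = 0 := by
  simp [edgeDist_mk_s14, SimpleGraph.dist_self]

lemma edgeDist_spoke (i z : Fin m) :
    (wheelGraph m).edgeDist s(none, some i) (some z) = if z = i then 0 else 1 := by
  rw [edgeDist_mk_s14]
  rcases eq_or_ne z i with h | h
  · subst h; simp [SimpleGraph.dist_self]
  · rw [if_neg h, dist_adj (adj_none_some z)]
    have h2 := wdist_ne_zero (show (some i : Option (Fin m)) ≠ some z by simpa using h.symm)
    omega

lemma edgeDist_rim_zero (i z : Fin m) (h : z = i ∨ z = i + 1) :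
    (wheelGraph m).edgeDist s(some i, some (i+1)) (some z) = 0 := by
  rcases h with h | h <;> subst h <;> simp [edgeDist_mk_s14, SimpleGraph.dist_self]

lemma edgeDist_rim_ne_zero (i z : Fin m) (h1 : z ≠ i) (h2 : z ≠ i + 1) :
    (wheelGraph m).edgeDist s(some i, some (i+1)) (some z) ≠ 0 := by
  rw [edgeDist_mk_s14]
  have ha := wdist_ne_zero (show (some i : Option (Fin m)) ≠ some z by simpa using h1.symm)
  have hb := wdist_ne_zero (show (some (i+1) : Option (Fin m)) ≠ some z by simpa using h2.symm)
  omega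

lemma edgeDist_rim_far (hm : 5 ≤ m) (j : Fin m) :
    (wheelGraph m).edgeDist s(some j, some (j+1)) (some (j + 3)) = 2 := by
  have e31 : j + 3 ≠ j + 1 := by
    simpa using fin_shift_ne j (k := 3) (l := 1) (by omega) (by omega) (by omega)
  have e30 : j + 3 ≠ j := by
    simpa using fin_shift_ne j (k := 3) (l := 0) (by omega) (by omega) (by omega)
  have e04 : j ≠ j + 3 + 1 := by
    rw [add_assoc]
    have : ((3 : Fin m) + 1) = ((4 : ℕ) : Fin m) := by norm_num
    rw [this]
    simpa using fin_shift_ne j (k := 0) (l := 4) (by omega) (by omega) (by omega)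
  have e32 : j + 3 ≠ j + 1 + 1 := by
    rw [add_assoc]
    have : ((1 : Fin m) + 1) = ((2 : ℕ) : Fin m) := by norm_num
    rw [this]
    have : ((3:ℕ) : Fin m) = (3 : Fin m) := by norm_num
    rw [← this]
    exact fin_shift_ne j (k := 3) (l := 2) (by omega) (by omega) (by omega)
  have e14 : j + 1 ≠ j + 3 + 1 := by
    rw [add_assoc]
    have h4 : ((3 : Fin m) + 1) = ((4 : ℕ) : Fin m) := by norm_num
    rw [h4]
    have h1 : ((1:ℕ) : Fin m) = (1 : Fin m) := by norm_num
    rw [← h1]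
    exact fin_shift_ne j (k := 1) (l := 4) (by omega) (by omega) (by omega)
  have h1 : (wheelGraph m).dist (some j) (some (j+3)) = 2 := by
    apply dist_eq_two _ _ (by simpa using e30.symm)
    rw [adj_some_iff (by omega)]
    rintro ⟨-, h | h⟩
    · exact e31 h
    · exact e04 h
  have h2 : (wheelGraph m).dist (some (j+1)) (some (j+3)) = 2 := by
    apply dist_eq_two _ _ (by simpa using e31.symm)
    rw [adj_some_iff (by omega)]
    rintro ⟨-, h | h⟩
    · exact e32 h
    · exact e14 h
  rw [edgeDist_mk_s14, h1, h2]; exact min_self 2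

lemma spoke_mem (i : Fin m) : s(none, some i) ∈ (wheelGraph m).edgeSet :=
  (SimpleGraph.mem_edgeSet _).mpr (adj_none_some i)

lemma rim_mem (hm : 5 ≤ m) (i : Fin m) :
    s(some i, some (i+1)) ∈ (wheelGraph m).edgeSet := by
  rw [SimpleGraph.mem_edgeSet, adj_some_iff (by omega)]
  refine ⟨?_, Or.inl rfl⟩
  have h01 : i + ((0:ℕ) : Fin m) ≠ i + ((1:ℕ) : Fin m) :=
    fin_shift_ne i (by omega) (by omega) (by omega)
  intro h
  exact (by simpa using h01 : i ≠ i + 1) h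

lemma edge_cases (hm : 5 ≤ m) {e : Sym2 (Option (Fin m))} (he : e ∈ (wheelGraph m).edgeSet) :
    (∃ i, e = s(none, some i)) ∨ (∃ i, e = s(some i, some (i+1))) := by
  induction e using Sym2.ind with
  | _ a b =>
    rw [SimpleGraph.mem_edgeSet] at he
    obtain (_ | i) := a <;> obtain (_ | j) := b
    · simp at he
    · exact Or.inl ⟨j, rfl⟩
    · exact Or.inl ⟨i, Sym2.eq_swap⟩
    · rw [adj_some_iff (by omega)] at he
      obtain ⟨-, h | h⟩ := he
      · exact Or.inr ⟨i, by rw [h]⟩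
      · exact Or.inr ⟨j, by rw [h, Sym2.eq_swap]⟩

lemma rim_inj (hm : 5 ≤ m) {i j : Fin m}
    (h : s(some i, some (i+1)) = (s(some j, some (j+1)) : Sym2 (Option (Fin m)))) : i = j := by
  rw [Sym2.eq_iff] at h
  obtain ⟨h1, -⟩ | ⟨h1, h2⟩ := h
  · exact Option.some_injective _ h1
  · exfalso
    have hi : i = j + 1 := Option.some_injective _ h1
    have hj : j = i + 1 := Option.some_injective _ h2.symm
    rw [hj, add_assoc] at hi
    have : ((1 : Fin m) + 1) = ((2 : ℕ) : Fin m) := by norm_num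
    rw [this] at hi
    have h02 : i + ((0:ℕ) : Fin m) ≠ i + ((2:ℕ) : Fin m) :=
      fin_shift_ne i (by omega) (by omega) (by omega)
    exact (by simpa using h02 : i ≠ i + ((2:ℕ) : Fin m)) hi

lemma fsne (hm : 5 ≤ m) (i : Fin m) {k l : ℕ} (hk : k ≤ 4) (hl : l ≤ 4) (hkl : k ≠ l) :
    i + (k : Fin m) ≠ i + (l : Fin m) := fin_shift_ne i (by omega) (by omega) hkl

lemma succ_ne (hm : 5 ≤ m) (i : Fin m) : i + 1 ≠ i := by
  simpa using fsne hm i (k := 1) (l := 0) (by omega) (by omega) (by omega)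

lemma filter_spokes (hm : 5 ≤ m) (i : Fin m) :
    Finset.univ.filter (fun z => (wheelGraph m).edgeDist s(none, some i) z ≠
        (wheelGraph m).edgeDist s(none, some (i+1)) z)
      = ({some i, some (i+1)} : Finset (Option (Fin m))) := by
  have hne := succ_ne hm i
  ext z
  simp only [mem_filter, mem_univ, true_and, mem_insert, mem_singleton]
  obtain (_ | k) := z
  · simp [edgeDist_spoke_none]
  · rw [edgeDist_spoke i k, edgeDist_spoke (i+1) k]
    simp only [Option.some.injEq]
    by_cases hk : k = i <;> by_cases hk' : k = i + 1 <;>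
      simp [hk, hk']
    all_goals simp [show m ≠ 1 by omega]

lemma spoke_rim_witness (hm : 5 ≤ m) (i j : Fin m) :
    ∃ a b : Fin m, a ≠ b ∧
      (wheelGraph m).edgeDist s(none, some i) (some a) ≠
        (wheelGraph m).edgeDist s(some j, some (j+1)) (some a) ∧
      (wheelGraph m).edgeDist s(none, some i) (some b) ≠
        (wheelGraph m).edgeDist s(some j, some (j+1)) (some b) := by
  have h31 : j + 3 ≠ j + 1 := by
    simpa using fsne hm j (k := 3) (l := 1) (by omega) (by omega) (by omega)
  have h30 : j + 3 ≠ j := by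
    simpa using fsne hm j (k := 3) (l := 0) (by omega) (by omega) (by omega)
  have hfar := edgeDist_rim_far hm j
  by_cases h1 : i = j
  · refine ⟨j + 1, j + 3, h31.symm, ?_, ?_⟩
    · rw [edgeDist_spoke, if_neg (h1 ▸ succ_ne hm j), edgeDist_rim_zero j _ (Or.inr rfl)]
      omega
    · rw [edgeDist_spoke, if_neg (h1 ▸ h30), hfar]
      omega
  · by_cases h2 : i = j + 1
    · refine ⟨j, j + 3, h30.symm, ?_, ?_⟩
      · rw [edgeDist_spoke, if_neg (h2 ▸ (succ_ne hm j).symm),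
          edgeDist_rim_zero j _ (Or.inl rfl)]
        omega
      · rw [edgeDist_spoke, if_neg (h2 ▸ h31), hfar]
        omega
    · refine ⟨i, j, h1, ?_, ?_⟩
      · rw [edgeDist_spoke, if_pos rfl]
        exact (edgeDist_rim_ne_zero j i h1 h2).symm
      · rw [edgeDist_spoke, if_neg (fun h => h1 h.symm),
          edgeDist_rim_zero j _ (Or.inl rfl)]
        omega

lemma rim_rim_witness (hm : 5 ≤ m) (i j : Fin m) (hij : i ≠ j) :
    ∃ a b : Fin m, a ≠ b ∧
      (wheelGraph m).edgeDist s(some i, some (i+1)) (some a) ≠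
        (wheelGraph m).edgeDist s(some j, some (j+1)) (some a) ∧
      (wheelGraph m).edgeDist s(some i, some (i+1)) (some b) ≠
        (wheelGraph m).edgeDist s(some j, some (j+1)) (some b) := by
  have key : ∀ k : Fin m, k + 1 + 1 ≠ k ∧ k + 1 + 1 ≠ k + 1 ∧ k ≠ k + 1 + 1 := by
    intro k
    have e20 : k + 1 + 1 ≠ k := by
      rw [add_assoc]
      have : ((1 : Fin m) + 1) = ((2 : ℕ) : Fin m) := by norm_num
      rw [this]
      simpa using fsne hm k (k := 2) (l := 0) (by omega) (by omega) (by omega)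
    exact ⟨e20, fun h => succ_ne hm (k+1) h, e20.symm⟩
  by_cases hj : j = i + 1
  · subst hj
    obtain ⟨e20, e21, e02⟩ := key i
    refine ⟨i, i + 1 + 1, e02, ?_, ?_⟩
    · rw [edgeDist_rim_zero i _ (Or.inl rfl)]
      exact (edgeDist_rim_ne_zero (i+1) i (succ_ne hm i).symm e02).symm
    · rw [edgeDist_rim_zero (i+1) _ (Or.inr rfl)]
      exact edgeDist_rim_ne_zero i _ e20 e21
  · by_cases hi : i = j + 1
    · subst hi
      obtain ⟨e20, e21, e02⟩ := key j
      refine ⟨j, j + 1 + 1, e02, ?_, ?_⟩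
      · rw [edgeDist_rim_zero j _ (Or.inl rfl)]
        exact edgeDist_rim_ne_zero (j+1) j (succ_ne hm j).symm e02
      · rw [edgeDist_rim_zero (j+1) _ (Or.inr rfl)]
        exact (edgeDist_rim_ne_zero j _ e20 e21).symm
    · refine ⟨i, i + 1, (succ_ne hm i).symm, ?_, ?_⟩
      · rw [edgeDist_rim_zero i _ (Or.inl rfl)]
        exact (edgeDist_rim_ne_zero j i hij hi).symm
      · rw [edgeDist_rim_zero i _ (Or.inr rfl)]
        exact (edgeDist_rim_ne_zero j (i+1) (fun h => hj h.symm)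
          (fun h => hij (add_right_cancel h))).symm

lemma witness (hm : 5 ≤ m) {e₁ e₂ : Sym2 (Option (Fin m))}
    (h₁ : e₁ ∈ (wheelGraph m).edgeSet) (h₂ : e₂ ∈ (wheelGraph m).edgeSet) (hne : e₁ ≠ e₂) :
    ∃ a b : Fin m, a ≠ b ∧
      (wheelGraph m).edgeDist e₁ (some a) ≠ (wheelGraph m).edgeDist e₂ (some a) ∧
      (wheelGraph m).edgeDist e₁ (some b) ≠ (wheelGraph m).edgeDist e₂ (some b) := by
  obtain ⟨i, rfl⟩ | ⟨i, rfl⟩ := edge_cases hm h₁ <;>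
    obtain ⟨j, rfl⟩ | ⟨j, rfl⟩ := edge_cases hm h₂
  · have hij : i ≠ j := fun h => hne (by rw [h])
    refine ⟨i, j, hij, ?_, ?_⟩
    · rw [edgeDist_spoke, edgeDist_spoke, if_pos rfl, if_neg hij]
      omega
    · rw [edgeDist_spoke, edgeDist_spoke, if_neg (fun h => hij h.symm), if_pos rfl]
      omega
  · exact spoke_rim_witness hm i j
  · obtain ⟨a, b, hab, ha, hb⟩ := spoke_rim_witness hm j i
    exact ⟨a, b, hab, ha.symm, hb.symm⟩
  · exact rim_rim_witness hm i j (fun h => hne (by rw [h]))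

noncomputable def g0 (m : ℕ) : Option (Fin m) → ℝ := fun v => if v = none then 0 else 1/2

lemma g0_nonneg (v : Option (Fin m)) : 0 ≤ g0 m v := by
  dsimp [g0]; split <;> norm_num

lemma g0_sum : ∑ v, g0 m v = m / 2 := by
  rw [Fintype.sum_option]
  simp [g0, Finset.sum_const, Fintype.card_fin]
  ring

lemma g0_irf (hm : 5 ≤ m) : (wheelGraph m).IsEdgeResolvingFunction (g0 m) := by
  constructor
  · intro v
    refine ⟨g0_nonneg v, ?_⟩
    dsimp [g0]; split <;> norm_num
  · intro e₁ h₁ e₂ h₂ hne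
    obtain ⟨a, b, hab, ha, hb⟩ := witness hm h₁ h₂ hne
    have hsub : ({some a, some b} : Finset (Option (Fin m))) ⊆
        Finset.univ.filter (fun z => (wheelGraph m).edgeDist e₁ z ≠ (wheelGraph m).edgeDist e₂ z) := by
      intro x hx
      simp only [mem_insert, mem_singleton] at hx
      rcases hx with rfl | rfl <;> simp [mem_filter, ha, hb]
    have hpair : ∑ z ∈ ({some a, some b} : Finset (Option (Fin m))), g0 m z = 1 := by
      rw [Finset.sum_pair (by simpa using hab)]
      simp only [g0, if_neg (Option.some_ne_none a), if_neg (Option.some_ne_none b)]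
      norm_num
    calc (1:ℝ) = ∑ z ∈ ({some a, some b} : Finset (Option (Fin m))), g0 m z := hpair.symm
      _ ≤ _ := Finset.sum_le_sum_of_subset_of_nonneg hsub (fun x _ _ => g0_nonneg x)

lemma wheel_lower (hm : 5 ≤ m) {g : Option (Fin m) → ℝ}
    (hg : (wheelGraph m).IsEdgeResolvingFunction g) : (m : ℝ) / 2 ≤ ∑ v, g v := by
  obtain ⟨hg01, hres⟩ := hg
  have hpair : ∀ i : Fin m, 1 ≤ g (some i) + g (some (i+1)) := by
    intro i
    have hne : (s(none, some i) : Sym2 (Option (Fin m))) ≠ s(none, some (i+1)) := by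
      intro h
      simp only [Sym2.eq_iff] at h
      rcases h with ⟨-, h⟩ | ⟨h, -⟩
      · exact succ_ne hm i (Option.some_injective _ h).symm
      · simp at h
    have := hres _ (spoke_mem i) _ (spoke_mem (i+1)) hne
    rwa [filter_spokes hm i, Finset.sum_pair (by simpa using (succ_ne hm i).symm)] at this
  have h2 : (m : ℝ) ≤ ∑ i : Fin m, (g (some i) + g (some (i+1))) := by
    calc (m : ℝ) = ∑ _i : Fin m, (1:ℝ) := by simp
      _ ≤ _ := Finset.sum_le_sum (fun i _ => hpair i)
  rw [Finset.sum_add_distrib] at h2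
  have h3 : ∑ i : Fin m, g (some (i+1)) = ∑ i : Fin m, g (some i) :=
    Fintype.sum_equiv (Equiv.addRight 1) _ _ (fun i => rfl)
  rw [h3] at h2
  have hnn : 0 ≤ g none := (hg01 none).1
  have hsum : ∑ v, g v = g none + ∑ i, g (some i) := Fintype.sum_option g
  linarith


end Aux


/-- For the wheel graph `W_n` of order `n ≥ 6`, `edim_f(W_n) = (n - 1)/2`. -/
theorem stmt_14 (n : ℕ) (hn : 6 ≤ n) :
    (wheelGraph (n - 1)).edimf = ((n : ℝ) - 1) / 2 := by
  have hm : 5 ≤ n - 1 := by omega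
  haveI : NeZero (n - 1) := ⟨by omega⟩
  have hcast : ((n - 1 : ℕ) : ℝ) = (n : ℝ) - 1 := by
    push_cast [Nat.cast_sub (by omega : 1 ≤ n)]
    ring
  have hmem : ((n - 1 : ℕ) : ℝ) / 2 ∈
      {x | ∃ g : Option (Fin (n-1)) → ℝ,
        (wheelGraph (n-1)).IsEdgeResolvingFunction g ∧ ∑ v, g v = x} :=
    ⟨g0 (n-1), g0_irf hm, g0_sum⟩
  have hlb : ∀ x ∈ {x | ∃ g : Option (Fin (n-1)) → ℝ,
      (wheelGraph (n-1)).IsEdgeResolvingFunction g ∧ ∑ v, g v = x},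
      ((n - 1 : ℕ) : ℝ) / 2 ≤ x := by
    rintro x ⟨g, hg, rfl⟩
    exact wheel_lower hm hg
  have : (wheelGraph (n-1)).edimf = ((n - 1 : ℕ) : ℝ) / 2 :=
    le_antisymm (csInf_le ⟨_, hlb⟩ hmem) (le_csInf ⟨_, hmem⟩ hlb)
  rw [this, hcast]
end

section
/- For the star K_{1,n−1} with n ≥ 3, edim_f(K_{1,n−1}) = (n−1)/2. -/
open Finset
open scoped Classical

variable {V : Type*}

section Star

variable {m : ℕ}

private lemma star_dist_inr_inr {i j : Fin m} (h : i ≠ j) :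
    (completeBipartiteGraph (Fin 1) (Fin m)).dist (Sum.inr i) (Sum.inr j) = 2 := by
  set G := completeBipartiteGraph (Fin 1) (Fin m) with hG
  let w : G.Walk (Sum.inr i) (Sum.inr j) :=
    SimpleGraph.Walk.cons (v := Sum.inl 0) (by simp [hG])
      (SimpleGraph.Walk.cons (by simp [hG]) SimpleGraph.Walk.nil)
  have h2 : G.dist (Sum.inr i) (Sum.inr j) ≤ 2 := by
    have := SimpleGraph.dist_le w
    simpa [w] using this
  have h0 : G.dist (Sum.inr i) (Sum.inr j) ≠ 0 := by
    rw [ne_eq, SimpleGraph.dist_eq_zero_iff_eq_or_not_reachable]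
    push_neg
    exact ⟨by simpa using h, ⟨w⟩⟩
  have h1 : G.dist (Sum.inr i) (Sum.inr j) ≠ 1 := by
    rw [ne_eq, SimpleGraph.dist_eq_one_iff_adj]
    simp [hG]
  omega

private lemma star_edgeDist_inl (i : Fin m) (a : Fin 1) :
    (completeBipartiteGraph (Fin 1) (Fin m)).edgeDist s(Sum.inl 0, Sum.inr i) (Sum.inl a) = 0 := by
  have ha : a = 0 := Subsingleton.elim _ _
  subst ha
  simp [SimpleGraph.edgeDist, SimpleGraph.dist_self]

private lemma star_edgeDist_inr (i k : Fin m) :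
    (completeBipartiteGraph (Fin 1) (Fin m)).edgeDist s(Sum.inl 0, Sum.inr i) (Sum.inr k)
      = if k = i then 0 else 1 := by
  rcases eq_or_ne k i with rfl | h
  · simp [SimpleGraph.edgeDist, SimpleGraph.dist_self]
  · simp only [SimpleGraph.edgeDist, Sym2.lift_mk, if_neg h]
    rw [SimpleGraph.dist_eq_one_iff_adj.mpr (by simp), star_dist_inr_inr (Ne.symm h)]
    rfl

private lemma star_edgeSet {e : Sym2 (Fin 1 ⊕ Fin m)}
    (he : e ∈ (completeBipartiteGraph (Fin 1) (Fin m)).edgeSet) :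
    ∃ i : Fin m, e = s(Sum.inl 0, Sum.inr i) := by
  induction e with
  | h x y =>
    rw [SimpleGraph.mem_edgeSet] at he
    rcases x with a | i <;> rcases y with b | j <;> simp at he
    · exact ⟨j, by rw [Subsingleton.elim a 0]⟩
    · exact ⟨i, by rw [Subsingleton.elim b 0, Sym2.eq_swap]⟩

private lemma star_filter {i j : Fin m} (h : i ≠ j) :
    Finset.univ.filter (fun z =>
        (completeBipartiteGraph (Fin 1) (Fin m)).edgeDist s(Sum.inl 0, Sum.inr i) z ≠
        (completeBipartiteGraph (Fin 1) (Fin m)).edgeDist s(Sum.inl 0, Sum.inr j) z)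
      = {Sum.inr i, Sum.inr j} := by
  ext z
  rcases z with a | k
  · simp [star_edgeDist_inl]
  · simp only [Finset.mem_filter, Finset.mem_univ, true_and, star_edgeDist_inr,
      Finset.mem_insert, Finset.mem_singleton]
    rcases eq_or_ne k i with rfl | hki <;> rcases eq_or_ne k j with rfl | hkj <;> simp_all

end Star

private lemma star_key {m : ℕ} {g : (Fin 1 ⊕ Fin m) → ℝ}
    (hg : (completeBipartiteGraph (Fin 1) (Fin m)).IsEdgeResolvingFunction g)
    {i j : Fin m} (hij : i ≠ j) : 1 ≤ g (Sum.inr i) + g (Sum.inr j) := by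
  have h := hg.2 s(Sum.inl 0, Sum.inr i) (by simp) s(Sum.inl 0, Sum.inr j) (by simp)
    (by simp [Sym2.eq_iff, hij])
  rwa [star_filter hij, Finset.sum_pair (by simp [hij])] at h

private lemma star_sum_lb {m : ℕ} (hm : 2 ≤ m) {g : (Fin 1 ⊕ Fin m) → ℝ}
    (hg : (completeBipartiteGraph (Fin 1) (Fin m)).IsEdgeResolvingFunction g) :
    (m : ℝ) / 2 ≤ ∑ v, g v := by
  set S := ∑ k : Fin m, g (Sum.inr k) with hS
  have hub : ∀ i : Fin m, ((m : ℝ) - 1) ≤ ∑ j ∈ Finset.univ.erase i, (g (Sum.inr i) + g (Sum.inr j)) := by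
    intro i
    have card : (Finset.univ.erase i).card = m - 1 := by
      rw [Finset.card_erase_of_mem (Finset.mem_univ i), Finset.card_univ, Fintype.card_fin]
    calc ((m : ℝ) - 1) = ∑ _j ∈ Finset.univ.erase i, (1 : ℝ) := by
          rw [Finset.sum_const, card, nsmul_eq_mul, mul_one]
          have : 1 ≤ m := by omega
          push_cast [this]
          ring
      _ ≤ _ := Finset.sum_le_sum fun j hj =>
          star_key hg (fun h => (Finset.mem_erase.mp hj).1 h.symm)
  have hsum : (m : ℝ) * ((m : ℝ) - 1) ≤ 2 * ((m : ℝ) - 1) * S := by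
    have h1 : (m : ℝ) * ((m : ℝ) - 1) ≤
        ∑ i : Fin m, ∑ j ∈ Finset.univ.erase i, (g (Sum.inr i) + g (Sum.inr j)) := by
      calc (m : ℝ) * ((m : ℝ) - 1) = ∑ _i : Fin m, ((m : ℝ) - 1) := by
            rw [Finset.sum_const, Finset.card_univ, Fintype.card_fin, nsmul_eq_mul]
        _ ≤ _ := Finset.sum_le_sum fun i _ => hub i
    have h2 : ∀ i : Fin m, ∑ j ∈ Finset.univ.erase i, (g (Sum.inr i) + g (Sum.inr j))
        = ((m : ℝ) - 1) * g (Sum.inr i) + (S - g (Sum.inr i)) := by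
      intro i
      rw [Finset.sum_add_distrib, Finset.sum_const,
        Finset.card_erase_of_mem (Finset.mem_univ i), Finset.card_univ, Fintype.card_fin,
        Finset.sum_erase_eq_sub (Finset.mem_univ i), nsmul_eq_mul]
      have : 1 ≤ m := by omega
      push_cast [this]
      ring
    calc (m : ℝ) * ((m : ℝ) - 1) ≤ _ := h1
      _ = ∑ i : Fin m, (((m : ℝ) - 1) * g (Sum.inr i) + (S - g (Sum.inr i))) :=
          Finset.sum_congr rfl fun i _ => h2 i
      _ = 2 * ((m : ℝ) - 1) * S := by
          rw [Finset.sum_add_distrib, Finset.sum_sub_distrib, ← Finset.mul_sum, ← hS,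
            Finset.sum_const, Finset.card_univ, Fintype.card_fin, nsmul_eq_mul]
          ring
  have hSlb : (m : ℝ) / 2 ≤ S := by
    have hm1 : (1 : ℝ) ≤ (m : ℝ) - 1 := by
      have : (2 : ℝ) ≤ (m : ℝ) := by exact_mod_cast hm
      linarith
    nlinarith
  have htot : ∑ v, g v = g (Sum.inl 0) + S := by
    rw [Fintype.sum_sum_type, hS, Fin.sum_univ_one]
  rw [htot]
  have := (hg.1 (Sum.inl 0)).1
  linarith

/-- For the star `K_{1,n-1}` with `n ≥ 3`, `edim_f(K_{1,n-1}) = (n-1)/2`. -/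
theorem stmt_16 (n : ℕ) (hn : 3 ≤ n) :
    (completeBipartiteGraph (Fin 1) (Fin (n - 1))).edimf = ((n : ℝ) - 1) / 2 := by
  set m := n - 1 with hmdef
  have hm : 2 ≤ m := by omega
  have hcast : ((m : ℝ)) = (n : ℝ) - 1 := by
    rw [hmdef, Nat.cast_sub (by omega : 1 ≤ n), Nat.cast_one]
  rw [← hcast]
  set G := completeBipartiteGraph (Fin 1) (Fin m) with hG
  have hmem : (m : ℝ) / 2 ∈
      {x | ∃ g : (Fin 1 ⊕ Fin m) → ℝ, G.IsEdgeResolvingFunction g ∧ ∑ v, g v = x} := by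
    refine ⟨Sum.elim (fun _ => 0) (fun _ => 1/2), ⟨fun v => by rcases v with a | k <;> norm_num, ?_⟩, ?_⟩
    · intro e₁ he₁ e₂ he₂ hne
      obtain ⟨i, rfl⟩ := star_edgeSet he₁
      obtain ⟨j, rfl⟩ := star_edgeSet he₂
      have hij : i ≠ j := fun h => hne (by rw [h])
      rw [star_filter hij, Finset.sum_pair (by simp [hij])]
      norm_num
    · rw [Fintype.sum_sum_type, Fin.sum_univ_one]
      simp only [Sum.elim_inl, Sum.elim_inr, Finset.sum_const, Finset.card_univ,
        Fintype.card_fin, nsmul_eq_mul]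
      ring
  have hlb : ∀ x ∈ {x | ∃ g : (Fin 1 ⊕ Fin m) → ℝ, G.IsEdgeResolvingFunction g ∧ ∑ v, g v = x},
      (m : ℝ) / 2 ≤ x := by
    rintro x ⟨g, hg, rfl⟩
    exact star_sum_lb hm hg
  exact le_antisymm (csInf_le ⟨(m : ℝ) / 2, hlb⟩ hmem) (le_csInf ⟨_, hmem⟩ hlb)
end

section
/- Let G = K_{a_1,...,a_k} be a complete k-partite graph of order n = Σ a_i ≥ 3 with k ≥ 3 and with exactly one part of size one. Then edim_f(G) = n/2. -/
open Finset
open scoped Classical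

variable {V : Type*}

/-- The complete multipartite graph with parts `Fin (a i)`, `i : Fin k`:
two vertices are adjacent iff they lie in distinct parts. -/
def completeMultipartite {k : ℕ} (a : Fin k → ℕ) : SimpleGraph (Σ i, Fin (a i)) where
  Adj v w := v.1 ≠ w.1
  symm := ⟨fun _ _ h => Ne.symm h⟩
  loopless := ⟨fun _ h => h rfl⟩

section Aux

variable {k : ℕ} {a : Fin k → ℕ}

lemma cm_adj_iff (u w : Σ i, Fin (a i)) :
    (completeMultipartite a).Adj u w ↔ u.1 ≠ w.1 := Iff.rfl

lemma cm_dist_eq (hreach : ∀ i : Fin k, ∃ j, j ≠ i ∧ 0 < a j)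
    (u w : Σ i, Fin (a i)) :
    (completeMultipartite a).dist u w =
      if u = w then 0 else if u.1 = w.1 then 2 else 1 := by
  by_cases h : u = w
  · simp [h]
  · by_cases h2 : u.1 = w.1
    · obtain ⟨j, hj, hpos⟩ := hreach u.1
      set z : Σ i, Fin (a i) := ⟨j, ⟨0, hpos⟩⟩ with hz
      have hadj1 : (completeMultipartite a).Adj u z := by
        simp [completeMultipartite, hz]
        exact fun hh => hj hh.symm
      have hadj2 : (completeMultipartite a).Adj z w := by
        simp [completeMultipartite, hz]
        rw [← h2]; exact fun hh => hj hh
      have hle : (completeMultipartite a).dist u w ≤ 2 := by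
        simpa using SimpleGraph.dist_le
          (SimpleGraph.Walk.cons hadj1 (SimpleGraph.Walk.cons hadj2 SimpleGraph.Walk.nil))
      have hr : (completeMultipartite a).Reachable u w :=
        ⟨SimpleGraph.Walk.cons hadj1 (SimpleGraph.Walk.cons hadj2 SimpleGraph.Walk.nil)⟩
      have h0 : 0 < (completeMultipartite a).dist u w := hr.pos_dist_of_ne h
      have h1' : (completeMultipartite a).dist u w ≠ 1 := by
        intro hc
        have := (SimpleGraph.dist_eq_one_iff_adj).mp hc
        exact this h2
      simp only [h, h2, if_false, if_true]
      omega
    · have hadj : (completeMultipartite a).Adj u w := h2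
      simp [h, h2, SimpleGraph.dist_eq_one_iff_adj.mpr hadj]

lemma cm_edgeDist_mk (p q w : Σ i, Fin (a i)) :
    (completeMultipartite a).edgeDist s(p, q) w =
      min ((completeMultipartite a).dist p w) ((completeMultipartite a).dist q w) := rfl

lemma cm_edgeDist_eq_one (hreach : ∀ i : Fin k, ∃ j, j ≠ i ∧ 0 < a j)
    {p q w : Σ i, Fin (a i)} (hpw : w ≠ p) (hqw : w ≠ q)
    (h : p.1 ≠ w.1 ∨ q.1 ≠ w.1) :
    (completeMultipartite a).edgeDist s(p, q) w = 1 := by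
  rw [cm_edgeDist_mk, cm_dist_eq hreach, cm_dist_eq hreach]
  have h1 : ¬ p = w := fun hh => hpw hh.symm
  have h2 : ¬ q = w := fun hh => hqw hh.symm
  rcases h with h | h <;> split_ifs <;> simp_all

lemma cm_edgeDist_eq_zero_iff (hreach : ∀ i : Fin k, ∃ j, j ≠ i ∧ 0 < a j)
    (e : Sym2 (Σ i, Fin (a i))) (w : Σ i, Fin (a i)) :
    (completeMultipartite a).edgeDist e w = 0 ↔ w ∈ e := by
  induction e using Sym2.inductionOn with
  | hf p q =>
    rw [cm_edgeDist_mk, cm_dist_eq hreach, cm_dist_eq hreach, Sym2.mem_iff]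
    constructor
    · intro h
      rcases Nat.min_eq_zero_iff.mp h with h | h <;> split_ifs at h <;> simp_all [eq_comm]
    · rintro (rfl | rfl) <;> simp

lemma sym2_two {W : Type*} (e₁ e₂ : Sym2 W) (h1 : ¬ e₁.IsDiag) (h2 : ¬ e₂.IsDiag)
    (hne : e₁ ≠ e₂) :
    ∃ w₁ w₂ : W, w₁ ≠ w₂ ∧ ¬(w₁ ∈ e₁ ↔ w₁ ∈ e₂) ∧ ¬(w₂ ∈ e₁ ↔ w₂ ∈ e₂) := by
  induction e₁ using Sym2.inductionOn with
  | hf p q =>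
  induction e₂ using Sym2.inductionOn with
  | hf r s =>
  rw [Sym2.mk_isDiag_iff] at h1 h2
  rw [ne_eq, Sym2.eq_iff] at hne
  simp only [Sym2.mem_iff]
  by_cases hp : p = r ∨ p = s
  · by_cases hq : q = r ∨ q = s
    · exfalso; apply hne
      rcases hp with rfl | rfl <;> rcases hq with h | h <;> tauto
    · push_neg at hq
      rcases hp with rfl | rfl
      · exact ⟨q, s, hq.2, by tauto, by tauto⟩
      · exact ⟨q, r, hq.1, by tauto, by tauto⟩
  · push_neg at hp
    by_cases hq : q = r ∨ q = s
    · rcases hq with rfl | rfl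
      · exact ⟨p, s, hp.2, by tauto, by tauto⟩
      · exact ⟨p, r, hp.1, by tauto, by tauto⟩
    · push_neg at hq
      exact ⟨p, q, h1, by tauto, by tauto⟩

lemma pair_sum {m : ℕ} (hm : 2 ≤ m) (f : Fin m → ℝ)
    (h : ∀ x y : Fin m, x ≠ y → 1 ≤ f x + f y) :
    (m : ℝ) / 2 ≤ ∑ x, f x := by
  set S := ∑ x, f x with hS
  have key : (m : ℝ) * ((m : ℝ) - 1) ≤ ∑ x : Fin m, ∑ y ∈ univ.erase x, (f x + f y) := by
    have step : ∀ x : Fin m, ((m : ℝ) - 1) ≤ ∑ y ∈ univ.erase x, (f x + f y) := by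
      intro x
      have hcard : (univ.erase x).card = m - 1 := by
        simp [Finset.card_erase_of_mem]
      have hle := Finset.card_nsmul_le_sum (univ.erase x) (fun y => f x + f y) 1
        (fun y hy => h x y (Ne.symm (Finset.ne_of_mem_erase hy)))
      rw [hcard, nsmul_eq_mul, mul_one] at hle
      have hcast : ((m - 1 : ℕ) : ℝ) = (m : ℝ) - 1 := by
        have h1m : 1 ≤ m := by omega
        push_cast [h1m]; ring
      linarith [hcast ▸ hle]
    calc (m : ℝ) * ((m : ℝ) - 1) = ∑ _x : Fin m, ((m : ℝ) - 1) := by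
          rw [Finset.sum_const, Finset.card_univ, Fintype.card_fin, nsmul_eq_mul]
      _ ≤ _ := Finset.sum_le_sum (fun x _ => step x)
  have expand : ∑ x : Fin m, ∑ y ∈ univ.erase x, (f x + f y) = (2 * (m : ℝ) - 2) * S := by
    have step : ∀ x : Fin m, ∑ y ∈ univ.erase x, (f x + f y)
        = ((m : ℝ) - 1) * f x + (S - f x) := by
      intro x
      have h1m : 1 ≤ m := by omega
      have hcast : ((m - 1 : ℕ) : ℝ) = (m : ℝ) - 1 := by push_cast [h1m]; ring
      rw [Finset.sum_add_distrib, Finset.sum_const, Finset.card_erase_of_mem (mem_univ x),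
        Finset.sum_erase_eq_sub (mem_univ x), Finset.card_univ, Fintype.card_fin,
        nsmul_eq_mul, hcast, ← hS]
    rw [Finset.sum_congr rfl (fun x _ => step x), Finset.sum_add_distrib,
      Finset.sum_sub_distrib, ← Finset.mul_sum, Finset.sum_const, Finset.card_univ,
      Fintype.card_fin, ← hS]
    push_cast
    ring
  rw [expand] at key
  have hm' : (2 : ℝ) ≤ (m : ℝ) := by exact_mod_cast hm
  nlinarith [key, hm']

end Aux

/-- For a complete `k`-partite graph (`k ≥ 3`) of order `n = Σ aᵢ ≥ 3` with exactly
one part of size one, `edim_f(G) = n/2`. -/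
theorem stmt_17 (k : ℕ) (hk : 3 ≤ k) (a : Fin k → ℕ) (i₀ : Fin k)
    (h1 : a i₀ = 1) (h2 : ∀ i : Fin k, i ≠ i₀ → 2 ≤ a i) :
    (completeMultipartite a).edimf = ((∑ i, a i : ℕ) : ℝ) / 2 := by
  classical
  set G := completeMultipartite a with hG
  set n := ∑ i, a i with hn
  -- basic facts
  have hnt : Nontrivial (Fin k) := by
    have : 2 ≤ k := by omega
    exact Fin.nontrivial_iff_two_le.mpr this
  have hreach : ∀ i : Fin k, ∃ j, j ≠ i ∧ 0 < a j := by
    intro i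
    by_cases hi : i = i₀
    · obtain ⟨j, hj⟩ := exists_ne i₀
      exact ⟨j, hi ▸ hj, by have := h2 j hj; omega⟩
    · exact ⟨i₀, fun hh => hi hh.symm, by omega⟩
  have hthird : ∀ i j : Fin k, ∃ l, l ≠ i ∧ l ≠ j := by
    intro i j
    by_contra hc
    push_neg at hc
    have hsub : (univ : Finset (Fin k)) ⊆ {i, j} := by
      intro l _
      by_cases hli : l = i
      · simp [hli]
      · simp [hc l hli]
    have hcard := Finset.card_le_card hsub
    have : ({i, j} : Finset (Fin k)).card ≤ 2 :=
      (Finset.card_insert_le _ _).trans (by simp)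
    simp [Finset.card_univ] at hcard
    omega
  have hai₀ : 0 < a i₀ := by omega
  set v₀ : Σ i, Fin (a i) := ⟨i₀, ⟨0, hai₀⟩⟩ with hv₀
  have hFin1 : ∀ y : Fin (a i₀), y = ⟨0, hai₀⟩ := by
    intro y
    apply Fin.ext
    have := y.isLt
    omega
  have hsingle : ∀ w : Σ i, Fin (a i), w.1 = i₀ → w = v₀ := by
    rintro ⟨wi, wx⟩ hwi
    dsimp only at hwi
    subst hwi
    rw [hFin1 wx]
  have hcardV : Fintype.card (Σ i, Fin (a i)) = n := by
    simp [Fintype.card_sigma, hn]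
  have hn3 : 3 ≤ n := by
    obtain ⟨j, hj⟩ := exists_ne i₀
    have hsub : ({i₀, j} : Finset (Fin k)) ⊆ univ := Finset.subset_univ _
    have := Finset.sum_le_sum_of_subset (f := a) hsub
    rw [Finset.sum_pair (fun hh => hj hh.symm)] at this
    have := h2 j hj
    omega
  -- The resolving-set membership description
  have hSset : {x : ℝ | ∃ g, G.IsEdgeResolvingFunction g ∧ ∑ v, g v = x} =
      {x : ℝ | ∃ g, G.IsEdgeResolvingFunction g ∧ ∑ v, g v = x} := rfl
  -- Upper bound: the constant 1/2 function resolves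
  have hub : G.IsEdgeResolvingFunction (fun _ => (1 : ℝ) / 2) := by
    constructor
    · intro v; constructor <;> norm_num
    · intro e₁ he₁ e₂ he₂ hne
      have hd1 : ¬ e₁.IsDiag := G.not_isDiag_of_mem_edgeSet he₁
      have hd2 : ¬ e₂.IsDiag := G.not_isDiag_of_mem_edgeSet he₂
      obtain ⟨w₁, w₂, hww, hw1, hw2⟩ := sym2_two e₁ e₂ hd1 hd2 hne
      have hm : ∀ w, ¬(w ∈ e₁ ↔ w ∈ e₂) → G.edgeDist e₁ w ≠ G.edgeDist e₂ w := by
        intro w hw heq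
        apply hw
        rw [← cm_edgeDist_eq_zero_iff hreach e₁ w, ← cm_edgeDist_eq_zero_iff hreach e₂ w, heq]
      have hsub : ({w₁, w₂} : Finset (Σ i, Fin (a i))) ⊆
          Finset.univ.filter (fun z => G.edgeDist e₁ z ≠ G.edgeDist e₂ z) := by
        intro w hw
        simp only [Finset.mem_insert, Finset.mem_singleton] at hw
        rcases hw with rfl | rfl <;> simp [Finset.mem_filter, hm _ hw1, hm _ hw2]
      have hcard : 2 ≤ (Finset.univ.filter
          (fun z => G.edgeDist e₁ z ≠ G.edgeDist e₂ z)).card := by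
        have := Finset.card_le_card hsub
        rwa [Finset.card_pair hww] at this
      rw [Finset.sum_const]
      have : (2 : ℝ) ≤ ((Finset.univ.filter
          (fun z => G.edgeDist e₁ z ≠ G.edgeDist e₂ z)).card : ℝ) := by exact_mod_cast hcard
      rw [nsmul_eq_mul]
      linarith
  have hsumhalf : (∑ _v : Σ i, Fin (a i), (1 : ℝ) / 2) = (n : ℝ) / 2 := by
    rw [Finset.sum_const, Finset.card_univ, hcardV, nsmul_eq_mul]
    ring
  have hmem : ((n : ℝ) / 2) ∈
      {x : ℝ | ∃ g, G.IsEdgeResolvingFunction g ∧ ∑ v, g v = x} :=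
    ⟨fun _ => (1 : ℝ) / 2, hub, hsumhalf⟩
  -- Lower bound
  have hlb : ∀ x ∈ {x : ℝ | ∃ g, G.IsEdgeResolvingFunction g ∧ ∑ v, g v = x},
      (n : ℝ) / 2 ≤ x := by
    rintro x ⟨g, ⟨hg01, hgres⟩, hsum⟩
    -- Constraint C1 : singleton vs other part
    have C1 : ∀ X : Σ i, Fin (a i), X.1 ≠ i₀ → 1 ≤ g v₀ + g X := by
      intro X hX
      obtain ⟨l, hl1, hl2⟩ := hthird i₀ X.1
      have hal : 0 < a l := by have := h2 l hl1; omega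
      set z : Σ i, Fin (a i) := ⟨l, ⟨0, hal⟩⟩ with hz
      have hzv : z ≠ v₀ := by
        intro hc
        apply hl1
        exact congrArg Sigma.fst hc
      have hzX : z ≠ X := by
        intro hc
        apply hl2
        exact congrArg Sigma.fst hc
      have hvX : v₀ ≠ X := by
        intro hc
        apply hX
        rw [← hc]
      have he₁ : s(z, v₀) ∈ G.edgeSet := by
        rw [SimpleGraph.mem_edgeSet]
        exact hl1
      have he₂ : s(z, X) ∈ G.edgeSet := by
        rw [SimpleGraph.mem_edgeSet]
        exact hl2
      have hne : s(z, v₀) ≠ s(z, X) := by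
        intro hc
        rw [Sym2.eq_iff] at hc
        rcases hc with ⟨-, h⟩ | ⟨h, -⟩
        · exact hvX h
        · exact hzX h
      have hsub : Finset.univ.filter
          (fun w => G.edgeDist s(z, v₀) w ≠ G.edgeDist s(z, X) w) ⊆ {v₀, X} := by
        intro w hw
        simp only [Finset.mem_filter, Finset.mem_univ, true_and] at hw
        simp only [Finset.mem_insert, Finset.mem_singleton]
        by_contra hcon
        push_neg at hcon
        apply hw
        by_cases hwz : w = z
        · subst hwz
          rw [cm_edgeDist_mk, cm_edgeDist_mk]
          simp [SimpleGraph.dist_self]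
        · have hwv : w.1 ≠ i₀ := fun h => hcon.1 (hsingle w h)
          have hd1 : G.edgeDist s(z, v₀) w = 1 := by
            apply cm_edgeDist_eq_one hreach hwz hcon.1
            right
            exact fun h => hwv h.symm
          have hd2 : G.edgeDist s(z, X) w = 1 := by
            apply cm_edgeDist_eq_one hreach hwz hcon.2
            by_cases hwl : w.1 = l
            · right
              rw [← hwl] at hl2
              exact fun h => hl2 h.symm
            · left
              exact fun h => hwl h.symm
          rw [hd1, hd2]
      have hkey := hgres _ he₁ _ he₂ hne
      calc (1 : ℝ) ≤ _ := hkey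
        _ ≤ ∑ w ∈ ({v₀, X} : Finset _), g w :=
          Finset.sum_le_sum_of_subset_of_nonneg hsub (fun w _ _ => (hg01 w).1)
        _ = g v₀ + g X := Finset.sum_pair hvX
    -- Constraint C2 : twins in a common part
    have C2 : ∀ j : Fin k, j ≠ i₀ → ∀ y y' : Fin (a j), y ≠ y' →
        1 ≤ g ⟨j, y⟩ + g ⟨j, y'⟩ := by
      intro j hj y y' hyy
      set X : Σ i, Fin (a i) := ⟨j, y⟩ with hX
      set Y : Σ i, Fin (a i) := ⟨j, y'⟩ with hY
      have hXY : X ≠ Y := by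
        intro hc
        rw [hX, hY] at hc
        simp at hc
        exact hyy hc
      have hvX : v₀ ≠ X := by
        intro hc
        exact hj (congrArg Sigma.fst hc).symm
      have hvY : v₀ ≠ Y := by
        intro hc
        exact hj (congrArg Sigma.fst hc).symm
      have he₁ : s(v₀, X) ∈ G.edgeSet := by
        rw [SimpleGraph.mem_edgeSet]
        exact fun h => hj h.symm
      have he₂ : s(v₀, Y) ∈ G.edgeSet := by
        rw [SimpleGraph.mem_edgeSet]
        exact fun h => hj h.symm
      have hne : s(v₀, X) ≠ s(v₀, Y) := by
        intro hc
        rw [Sym2.eq_iff] at hc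
        rcases hc with ⟨-, h⟩ | ⟨h, -⟩
        · exact hXY h
        · exact hvY h
      have hsub : Finset.univ.filter
          (fun w => G.edgeDist s(v₀, X) w ≠ G.edgeDist s(v₀, Y) w) ⊆ {X, Y} := by
        intro w hw
        simp only [Finset.mem_filter, Finset.mem_univ, true_and] at hw
        simp only [Finset.mem_insert, Finset.mem_singleton]
        by_contra hcon
        push_neg at hcon
        apply hw
        by_cases hwv : w = v₀
        · subst hwv
          rw [cm_edgeDist_mk, cm_edgeDist_mk]
          simp [SimpleGraph.dist_self]
        · have hwv' : w.1 ≠ i₀ := fun h => hwv (hsingle w h)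
          have hd1 : G.edgeDist s(v₀, X) w = 1 := by
            apply cm_edgeDist_eq_one hreach hwv hcon.1
            left
            exact fun h => hwv' h.symm
          have hd2 : G.edgeDist s(v₀, Y) w = 1 := by
            apply cm_edgeDist_eq_one hreach hwv hcon.2
            left
            exact fun h => hwv' h.symm
          rw [hd1, hd2]
      have hkey := hgres _ he₁ _ he₂ hne
      calc (1 : ℝ) ≤ _ := hkey
        _ ≤ ∑ w ∈ ({X, Y} : Finset _), g w :=
          Finset.sum_le_sum_of_subset_of_nonneg hsub (fun w _ _ => (hg01 w).1)
        _ = g X + g Y := Finset.sum_pair hXY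
    -- Now the counting argument
    by_cases ht : (1 : ℝ) / 2 ≤ g v₀
    · -- every part contributes at least a i / 2
      set T : Fin k → ℝ := fun i => ∑ y : Fin (a i), g ⟨i, y⟩ with hT
      have hS : ∑ v, g v = ∑ i, T i := by
        rw [← Finset.univ_sigma_univ, Finset.sum_sigma]
      have hT0 : T i₀ = g v₀ := by
        have hy : ∀ y : Fin (a i₀), (⟨i₀, y⟩ : Σ i, Fin (a i)) = v₀ := by
          intro y
          apply hsingle
          rfl
        rw [hT]
        simp only
        rw [Finset.sum_congr rfl (fun y _ => by rw [hy y]), Finset.sum_const,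
          Finset.card_univ, Fintype.card_fin, h1, one_smul]
      have hTi : ∀ i : Fin k, ((a i : ℝ)) / 2 ≤ T i := by
        intro i
        by_cases hi : i = i₀
        · subst hi
          rw [hT0, h1]
          simpa using ht
        · exact pair_sum (h2 i hi) (fun y => g ⟨i, y⟩) (fun y y' hyy => C2 i hi y y' hyy)
      calc (n : ℝ) / 2 = ∑ i, ((a i : ℝ)) / 2 := by
            rw [hn]; push_cast; rw [Finset.sum_div]
        _ ≤ ∑ i, T i := Finset.sum_le_sum (fun i _ => hTi i)
        _ = x := by rw [← hS, hsum]
    · push_neg at ht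
      have hx : ∀ w : Σ i, Fin (a i), w ≠ v₀ → 1 - g v₀ ≤ g w := by
        intro w hw
        have hw1 : w.1 ≠ i₀ := fun h => hw (hsingle w h)
        have := C1 w hw1
        linarith
      have hsplit : ∑ v, g v = g v₀ + ∑ w ∈ univ.erase v₀, g w :=
        (Finset.add_sum_erase _ _ (mem_univ v₀)).symm
      have hcard : (univ.erase v₀).card = n - 1 := by
        rw [Finset.card_erase_of_mem (mem_univ v₀), Finset.card_univ, hcardV]
      have hge : ((n : ℝ) - 1) * (1 - g v₀) ≤ ∑ w ∈ univ.erase v₀, g w := by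
        have := Finset.card_nsmul_le_sum (univ.erase v₀) g (1 - g v₀)
          (fun w hw => hx w (Finset.ne_of_mem_erase hw))
        rw [hcard, nsmul_eq_mul] at this
        have hcast : ((n - 1 : ℕ) : ℝ) = (n : ℝ) - 1 := by
          have : 1 ≤ n := by omega
          push_cast [this]; ring
        rw [hcast] at this
        exact this
      have hg0 : 0 ≤ g v₀ := (hg01 v₀).1
      have hncast : (3 : ℝ) ≤ (n : ℝ) := by exact_mod_cast hn3
      have hxval : g v₀ + ((n : ℝ) - 1) * (1 - g v₀) ≤ x := by
        rw [← hsum, hsplit]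
        linarith
      nlinarith [hxval, hncast, ht, hg0]
  -- conclusion
  rw [hG] at *
  show sInf {x : ℝ | ∃ g, (completeMultipartite a).IsEdgeResolvingFunction g ∧ ∑ v, g v = x}
      = ((n : ℕ) : ℝ) / 2
  apply le_antisymm
  · exact csInf_le ⟨(n : ℝ) / 2, fun x hx => hlb x hx⟩ hmem
  · exact le_csInf ⟨_, hmem⟩ hlb
end
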